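/- The edge elimination polynomial ξ is the unique isomorphism-invariant function f from finite multigraphs to ℤ[x, y, z] such that: f(∅) = 1, f(E₁) = x, f(G₁ ⊕ G₂) = f(G₁)·f(G₂) for all finite multigraphs G₁, G₂, and f(G) = f(G_{−e}) + y·f(G_{/e}) + z·f(G_{†e}) for every finite multigraph G and every edge e of G. -/

import Mathlib

/-- A finite multigraph: finite vertex and edge types, each edge assigned an
unordered pair of (not necessarily distinct) endpoints. -/
structure Multigraph where
  V : Type
  E : Type
  [fintypeV : Fintype V]
  [decEqV : DecidableEq V]
  [fintypeE : Fintype E]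
  [decEqE : DecidableEq E]
  ends : E → Sym2 V

namespace Multigraph

attribute [instance] fintypeV decEqV fintypeE decEqE

/-- The empty multigraph. -/
def emptyGraph : Multigraph where
  V := Empty
  E := Empty
  ends := fun e => e.elim

/-- The one-vertex multigraph `E₁` with no edges. -/
def singleVertex : Multigraph where
  V := Unit
  E := Empty
  ends := fun e => e.elim

/-- Disjoint union of multigraphs. -/
def disjUnion (G₁ G₂ : Multigraph) : Multigraph where
  V := G₁.V ⊕ G₂.V
  E := G₁.E ⊕ G₂.E
  ends := Sum.elim (fun e => (G₁.ends e).map Sum.inl) (fun e => (G₂.ends e).map Sum.inr)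

/-- Deletion of an edge. -/
def deleteEdge (G : Multigraph) (e : G.E) : Multigraph where
  V := G.V
  E := {e' : G.E // e' ≠ e}
  ends := fun e' => G.ends e'.val

/-- Contraction of an edge: its endpoints are identified
(replaced by a single new vertex) and the edge is removed. -/
def contractEdge (G : Multigraph) (e : G.E) : Multigraph where
  V := {v : G.V // v ∉ G.ends e} ⊕ Unit
  E := {e' : G.E // e' ≠ e}
  ends := fun e' => (G.ends e'.val).map
    (fun v => if h : v ∈ G.ends e then Sum.inr () else Sum.inl ⟨v, h⟩)

/-- Extraction of an edge: both endpoints are deleted together with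
all incident edges. -/
def extractEdge (G : Multigraph) (e : G.E) : Multigraph where
  V := {v : G.V // v ∉ G.ends e}
  E := {e' : G.E // ∀ v : G.V, v ∈ G.ends e' → v ∉ G.ends e}
  ends := fun e' => (G.ends e'.val).attachWith (fun v hv => e'.prop v hv)

/-- Deletion of a vertex (together with all incident edges). -/
def deleteVertex (G : Multigraph) (v : G.V) : Multigraph where
  V := {w : G.V // w ≠ v}
  E := {e : G.E // v ∉ G.ends e}
  ends := fun e => (G.ends e.val).attachWith
    (fun w hw => fun hwv => e.prop (hwv ▸ hw))

/-- Number of connected components of the spanning subgraph `(V, S)`. -/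
noncomputable def k (G : Multigraph) (S : Finset G.E) : ℕ :=
  Nat.card (Quot (fun u v : G.V => ∃ e ∈ S, G.ends e = s(u, v)))

/-- Number of connected components of `(V(S), S)`, the graph on the vertices
covered by `S`. -/
noncomputable def kcov (G : Multigraph) (S : Finset G.E) : ℕ :=
  Nat.card (Quot (fun u v : {w : G.V // ∃ e ∈ S, w ∈ G.ends e} =>
    ∃ e ∈ S, G.ends e = s(u.val, v.val)))

/-- `V(A)` and `V(B)` are disjoint. -/
def CovDisjoint (G : Multigraph) (A B : Finset G.E) : Prop :=
  ∀ v : G.V, (∃ e ∈ A, v ∈ G.ends e) → ¬ (∃ e ∈ B, v ∈ G.ends e)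

instance (G : Multigraph) (A B : Finset G.E) : Decidable (G.CovDisjoint A B) := by
  unfold CovDisjoint; infer_instance

/-- The edge elimination polynomial (evaluated at `x y z` in a commutative ring):
`ξ(G,x,y,z) = Σ_{(A ⊔ B) ⊆ E} x^{k(A∪B)-k_cov(B)} y^{|A|+|B|-k_cov(B)} z^{k_cov(B)}`. -/
noncomputable def xi {R : Type*} [CommRing R] (G : Multigraph) (x y z : R) : R :=
  ∑ A : Finset G.E, ∑ B : Finset G.E,
    if G.CovDisjoint A B then
      x ^ (G.k (A ∪ B) - G.kcov B) * y ^ (A.card + B.card - G.kcov B) * z ^ G.kcov B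
    else 0

/-- Isomorphism of multigraphs. -/
structure Iso (G H : Multigraph) where
  vEquiv : G.V ≃ H.V
  eEquiv : G.E ≃ H.E
  ends_map : ∀ e : G.E, H.ends (eEquiv e) = (G.ends e).map vEquiv

end Multigraph

/-- An isomorphism-invariant function on finite multigraphs. -/
def Multigraph.Invariant {R : Type*} (f : Multigraph → R) : Prop :=
  ∀ G H : Multigraph, Nonempty (G.Iso H) → f G = f H


section QuotHelpers

variable {α β : Type*}

/-- Build an equivalence of quotients from maps descending both ways. -/
noncomputable def quotEquivOfMaps (r : α → α → Prop) (s : β → β → Prop)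
    (f : α → β) (g : β → α)
    (hf : ∀ a b, r a b → Quot.mk s (f a) = Quot.mk s (f b))
    (hg : ∀ a b, s a b → Quot.mk r (g a) = Quot.mk r (g b))
    (hgf : ∀ a, Quot.mk r (g (f a)) = Quot.mk r a)
    (hfg : ∀ b, Quot.mk s (f (g b)) = Quot.mk s b) :
    Quot r ≃ Quot s where
  toFun := Quot.lift (fun a => Quot.mk s (f a)) hf
  invFun := Quot.lift (fun b => Quot.mk r (g b)) hg
  left_inv := by rintro ⟨a⟩; exact hgf a
  right_inv := by rintro ⟨b⟩; exact hfg b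

lemma natCard_quot_eq_of_maps (r : α → α → Prop) (s : β → β → Prop)
    (f : α → β) (g : β → α)
    (hf : ∀ a b, r a b → Quot.mk s (f a) = Quot.mk s (f b))
    (hg : ∀ a b, s a b → Quot.mk r (g a) = Quot.mk r (g b))
    (hgf : ∀ a, Quot.mk r (g (f a)) = Quot.mk r a)
    (hfg : ∀ b, Quot.mk s (f (g b)) = Quot.mk s b) :
    Nat.card (Quot r) = Nat.card (Quot s) :=
  Nat.card_congr (quotEquivOfMaps r s f g hf hg hgf hfg)

/-- Transport a quotient along an equivalence of carriers. -/
lemma natCard_quot_congr (e : α ≃ β) (r : α → α → Prop) (s : β → β → Prop)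
    (h : ∀ a b, r a b → Quot.mk s (e a) = Quot.mk s (e b))
    (h' : ∀ a b, s a b → Quot.mk r (e.symm a) = Quot.mk r (e.symm b)) :
    Nat.card (Quot r) = Nat.card (Quot s) := by
  refine natCard_quot_eq_of_maps r s e e.symm h h' (fun a => by simp) (fun b => by simp)

/-- Splitting off one extra component. -/
lemma natCard_quot_split [Finite α] [Finite β] (r : α → α → Prop) (s : β → β → Prop)
    (p : α → Prop) (f : ∀ a, ¬ p a → β) (g : β → α) (a₀ : α) (hpa₀ : p a₀)
    (hr : ∀ a b, r a b → ((p a ∧ p b) ∨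
      (∃ (ha : ¬ p a) (hb : ¬ p b), Quot.mk s (f a ha) = Quot.mk s (f b hb))))
    (hp : ∀ a, p a → Quot.mk r a = Quot.mk r a₀)
    (hg : ∀ a b, s a b → Quot.mk r (g a) = Quot.mk r (g b))
    (hgp : ∀ b, ¬ p (g b))
    (hfg : ∀ b, Quot.mk s (f (g b) (hgp b)) = Quot.mk s b)
    (hgf : ∀ a (h : ¬ p a), Quot.mk r (g (f a h)) = Quot.mk r a) :
    Nat.card (Quot r) = Nat.card (Quot s) + 1 := by
  classical
  have e : Quot r ≃ (Quot s) ⊕ Unit := {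
    toFun := Quot.lift (fun a => if h : p a then Sum.inr () else Sum.inl (Quot.mk s (f a h)))
      (by
        intro a b hab
        rcases hr a b hab with ⟨h1, h2⟩ | ⟨h1, h2, h3⟩
        · simp [h1, h2]
        · simp [h1, h2, h3])
    invFun := Sum.elim (Quot.lift (fun b => Quot.mk r (g b)) hg) (fun _ => Quot.mk r a₀)
    left_inv := by
      rintro ⟨a⟩
      by_cases h : p a
      · simp only [Quot.lift, h, dif_pos, Sum.elim_inr]
        exact (hp a h).symm
      · simpa [h] using hgf a h
    right_inv := by
      rintro (b | u)
      · induction b using Quot.ind with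
        | _ b => simpa [hgp b] using congrArg (Sum.inl : Quot s → Quot s ⊕ Unit) (hfg b)
      · simp [hpa₀] }
  rw [Nat.card_congr e, Nat.card_sum]
  simp

/-- Quotient of a sum whose relation doesn't cross the two sides. -/
lemma natCard_quot_sum [Finite α] [Finite β] (r : (α ⊕ β) → (α ⊕ β) → Prop)
    (r₁ : α → α → Prop) (r₂ : β → β → Prop)
    (h₁ : ∀ a b, r (Sum.inl a) (Sum.inl b) ↔ r₁ a b)
    (h₂ : ∀ a b, r (Sum.inr a) (Sum.inr b) ↔ r₂ a b)
    (h₃ : ∀ a b, ¬ r (Sum.inl a) (Sum.inr b))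
    (h₄ : ∀ a b, ¬ r (Sum.inr a) (Sum.inl b)) :
    Nat.card (Quot r) = Nat.card (Quot r₁) + Nat.card (Quot r₂) := by
  have e : Quot r ≃ (Quot r₁) ⊕ (Quot r₂) := {
    toFun := Quot.lift (Sum.elim (fun a => Sum.inl (Quot.mk r₁ a)) (fun b => Sum.inr (Quot.mk r₂ b)))
      (by
        rintro (a | a) (b | b) hab
        · exact congrArg Sum.inl (Quot.sound ((h₁ a b).1 hab))
        · exact absurd hab (h₃ a b)
        · exact absurd hab (h₄ a b)
        · exact congrArg Sum.inr (Quot.sound ((h₂ a b).1 hab)))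
    invFun := Sum.elim
      (Quot.lift (fun a => Quot.mk r (Sum.inl a)) (fun a b hab => Quot.sound ((h₁ a b).2 hab)))
      (Quot.lift (fun b => Quot.mk r (Sum.inr b)) (fun a b hab => Quot.sound ((h₂ a b).2 hab)))
    left_inv := by rintro ⟨a | b⟩ <;> rfl
    right_inv := by
      rintro (a | b)
      · induction a using Quot.ind with | _ a => rfl
      · induction b using Quot.ind with | _ b => rfl }
  rw [Nat.card_congr e, Nat.card_sum]

end QuotHelpers
open MvPolynomial in
/-- A single summand of `xi`. -/
noncomputable def Multigraph.term (G : Multigraph) (A B : Finset G.E) :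
    MvPolynomial (Fin 3) ℤ :=
  if G.CovDisjoint A B then
    X 0 ^ (G.k (A ∪ B) - G.kcov B) * X 1 ^ (A.card + B.card - G.kcov B) * X 2 ^ G.kcov B
  else 0

namespace Multigraph
open MvPolynomial

/-- The relation generating connectivity for `k`. -/
def krel (G : Multigraph) (S : Finset G.E) (a b : G.V) : Prop := ∃ e ∈ S, G.ends e = s(a, b)

/-- `w` is covered by `S`. -/
def Cov (G : Multigraph) (S : Finset G.E) (w : G.V) : Prop := ∃ e ∈ S, w ∈ G.ends e

/-- The relation generating connectivity for `kcov`. -/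
def ckrel (G : Multigraph) (S : Finset G.E) (a b : {w : G.V // G.Cov S w}) : Prop :=
  ∃ e ∈ S, G.ends e = s(a.val, b.val)

variable {G H : Multigraph}

lemma sym2_exists_pair {α : Type*} (z : Sym2 α) : ∃ u v, z = s(u, v) :=
  Sym2.inductionOn z fun u v => ⟨u, v, rfl⟩

lemma k_eq (G : Multigraph) (S : Finset G.E) : G.k S = Nat.card (Quot (G.krel S)) := rfl

lemma kcov_eq (G : Multigraph) (S : Finset G.E) :
    G.kcov S = Nat.card (Quot (G.ckrel S)) := rfl

lemma xi_eq (G : Multigraph) :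
    G.xi (X 0 : MvPolynomial (Fin 3) ℤ) (X 1) (X 2) =
      ∑ A : Finset G.E, ∑ B : Finset G.E, G.term A B := rfl

lemma covDisjoint_iff (A B : Finset G.E) :
    G.CovDisjoint A B ↔ ∀ v : G.V, G.Cov A v → ¬ G.Cov B v := Iff.rfl

lemma krel_symm {S : Finset G.E} {a b : G.V} (h : G.krel S a b) : G.krel S b a := by
  obtain ⟨e, he, h⟩ := h
  exact ⟨e, he, h.trans Sym2.eq_swap⟩

lemma mkv_eq_of_krel {S : Finset G.E} {a b : G.V} (h : G.krel S a b) :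
    Quot.mk (G.krel S) a = Quot.mk (G.krel S) b := Quot.sound h

/-- Two vertices on a common edge of `S` lie in the same component. -/
lemma mkv_eq_of_mem {S : Finset G.E} {e : G.E} (he : e ∈ S) {a b : G.V}
    (ha : a ∈ G.ends e) (hb : b ∈ G.ends e) :
    Quot.mk (G.krel S) a = Quot.mk (G.krel S) b := by
  obtain ⟨u, v, hz⟩ := sym2_exists_pair (G.ends e)
  · rw [hz, Sym2.mem_iff] at ha hb
    have hr : G.krel S u v := ⟨e, he, hz⟩
    rcases ha with rfl | rfl <;> rcases hb with rfl | rfl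
    · rfl
    · exact Quot.sound hr
    · exact (Quot.sound hr).symm
    · rfl

lemma mkc_eq_of_eq {S : Finset G.E} {a b : {w : G.V // G.Cov S w}} (h : a.val = b.val) :
    Quot.mk (G.ckrel S) a = Quot.mk (G.ckrel S) b := by
  cases a; cases b; cases h; rfl

lemma mkc_eq_of_mem {S : Finset G.E} {e : G.E} (he : e ∈ S) {a b : {w : G.V // G.Cov S w}}
    (ha : a.val ∈ G.ends e) (hb : b.val ∈ G.ends e) :
    Quot.mk (G.ckrel S) a = Quot.mk (G.ckrel S) b := by
  obtain ⟨u, v, hz⟩ := sym2_exists_pair (G.ends e)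
  · rw [hz, Sym2.mem_iff] at ha hb
    rcases ha with ha | ha <;> rcases hb with hb | hb
    · exact mkc_eq_of_eq (ha.trans hb.symm)
    · exact Quot.sound ⟨e, he, by rw [hz, ha, hb]⟩
    · exact (Quot.sound ⟨e, he, by rw [hz, ha, hb]⟩).symm
    · exact mkc_eq_of_eq (ha.trans hb.symm)

lemma kcov_le_card (G : Multigraph) (S : Finset G.E) : G.kcov S ≤ S.card := by
  classical
  rw [kcov_eq, ← Nat.card_eq_finsetCard]
  apply Nat.card_le_card_of_surjective
    (f := fun x : {e // e ∈ S} =>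
      Quot.mk (G.ckrel S) ⟨(G.ends x.1).out.1, ⟨x.1, x.2, Sym2.out_fst_mem _⟩⟩)
  rintro ⟨⟨w, hw⟩⟩
  obtain ⟨e, he, hwe⟩ := hw
  exact ⟨⟨e, he⟩, mkc_eq_of_mem he (Sym2.out_fst_mem _) hwe⟩

end Multigraph
namespace Multigraph
open MvPolynomial

instance quotIsEmpty {α : Type*} [IsEmpty α] (r : α → α → Prop) : IsEmpty (Quot r) := by
  constructor
  rintro ⟨a⟩
  exact isEmptyElim a

variable {G H : Multigraph}

lemma covDisjoint_of_isEmpty_right {A B : Finset G.E} (h : IsEmpty G.E) :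
    G.CovDisjoint A B := fun v _ hc => by obtain ⟨e, _, _⟩ := hc; exact isEmptyElim e

lemma term_of_no_edges (h : IsEmpty G.E) (A B : Finset G.E) :
    G.term A B = X 0 ^ G.k (A ∪ B) := by
  haveI := h
  obtain rfl : A = ∅ := Finset.eq_empty_of_isEmpty A
  obtain rfl : B = ∅ := Finset.eq_empty_of_isEmpty B
  have hkc : G.kcov ∅ = 0 := by
    rw [kcov_eq]
    haveI : IsEmpty {w : G.V // G.Cov (∅ : Finset G.E) w} :=
      ⟨fun x => by obtain ⟨e, _, _⟩ := x.2; exact isEmptyElim e⟩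
    exact Nat.card_of_isEmpty
  simp only [Multigraph.term, if_pos (covDisjoint_of_isEmpty_right h), hkc]
  simp

lemma xi_of_no_edges (hE : IsEmpty G.E) :
    G.xi (X 0 : MvPolynomial (Fin 3) ℤ) (X 1) (X 2) = X 0 ^ G.k ∅ := by
  haveI := hE
  rw [xi_eq]
  have h1 : ∀ A B : Finset G.E, G.term A B = X 0 ^ G.k ∅ := by
    intro A B
    rw [term_of_no_edges hE, Finset.eq_empty_of_isEmpty (A ∪ B)]
  simp only [h1, Finset.sum_const, Finset.card_univ, Fintype.card_finset]
  simp

lemma k_empty_of_isEmptyV (h : IsEmpty G.V) : G.k ∅ = 0 := by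
  rw [k_eq]
  haveI := h
  exact Nat.card_of_isEmpty

lemma xi_emptyGraph : Multigraph.emptyGraph.xi (X 0 : MvPolynomial (Fin 3) ℤ) (X 1) (X 2) = 1 := by
  haveI : IsEmpty Multigraph.emptyGraph.E := inferInstanceAs (IsEmpty Empty)
  haveI : IsEmpty Multigraph.emptyGraph.V := inferInstanceAs (IsEmpty Empty)
  rw [xi_of_no_edges ‹_›, k_empty_of_isEmptyV ‹_›, pow_zero]

lemma xi_singleVertex :
    Multigraph.singleVertex.xi (X 0 : MvPolynomial (Fin 3) ℤ) (X 1) (X 2) = X 0 := by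
  haveI : IsEmpty Multigraph.singleVertex.E := inferInstanceAs (IsEmpty Empty)
  rw [xi_of_no_edges ‹_›]
  have : Multigraph.singleVertex.k ∅ = 1 := by
    rw [k_eq]
    haveI : Unique (Quot (Multigraph.singleVertex.krel ∅)) :=
      { default := Quot.mk _ ()
        uniq := by rintro ⟨a⟩; rfl }
    exact Nat.card_unique
  rw [this, pow_one]

section Iso
variable (φ : G.Iso H)

lemma iso_cov {S : Finset G.E} {w : G.V} :
    H.Cov (S.map φ.eEquiv.toEmbedding) (φ.vEquiv w) ↔ G.Cov S w := by
  constructor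
  · rintro ⟨e0, he0, hmem⟩
    rw [Finset.mem_map] at he0
    obtain ⟨e, he, rfl⟩ := he0
    rw [Equiv.coe_toEmbedding, φ.ends_map, Sym2.mem_map] at hmem
    obtain ⟨a, ha, hae⟩ := hmem
    exact ⟨e, he, (φ.vEquiv.injective hae) ▸ ha⟩
  · rintro ⟨e, he, hmem⟩
    exact ⟨φ.eEquiv e, Finset.mem_map_of_mem _ he,
      by rw [φ.ends_map]; exact Sym2.mem_map.2 ⟨w, hmem, rfl⟩⟩

lemma iso_cov_symm {S : Finset G.E} {w : H.V} :
    H.Cov (S.map φ.eEquiv.toEmbedding) w ↔ G.Cov S (φ.vEquiv.symm w) := by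
  conv_lhs => rw [← Equiv.apply_symm_apply φ.vEquiv w]
  exact iso_cov φ

lemma iso_krel {S : Finset G.E} {a b : G.V} (h : G.krel S a b) :
    H.krel (S.map φ.eEquiv.toEmbedding) (φ.vEquiv a) (φ.vEquiv b) := by
  obtain ⟨e, he, hz⟩ := h
  exact ⟨φ.eEquiv e, Finset.mem_map_of_mem _ he,
    by rw [φ.ends_map, hz, Sym2.map_pair_eq]⟩

lemma iso_krel' {S : Finset G.E} {a b : H.V}
    (h : H.krel (S.map φ.eEquiv.toEmbedding) a b) :
    G.krel S (φ.vEquiv.symm a) (φ.vEquiv.symm b) := by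
  obtain ⟨e0, he0, hz⟩ := h
  rw [Finset.mem_map] at he0
  obtain ⟨e, he, rfl⟩ := he0
  rw [Equiv.coe_toEmbedding, φ.ends_map] at hz
  obtain ⟨p, q, hpq⟩ := sym2_exists_pair (G.ends e)
  rw [hpq, Sym2.map_pair_eq, Sym2.eq_iff] at hz
  rcases hz with ⟨h1, h2⟩ | ⟨h1, h2⟩
  · refine ⟨e, he, ?_⟩
    rw [hpq, ← h1, ← h2]
    simp
  · refine ⟨e, he, ?_⟩
    rw [hpq, ← h1, ← h2]
    simp [Sym2.eq_swap]

lemma iso_k (S : Finset G.E) : G.k S = H.k (S.map φ.eEquiv.toEmbedding) := by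
  rw [k_eq, k_eq]
  exact natCard_quot_congr φ.vEquiv _ _ (fun a b h => Quot.sound (iso_krel φ h))
    (fun a b h => Quot.sound (iso_krel' φ h))

lemma iso_kcov (S : Finset G.E) : G.kcov S = H.kcov (S.map φ.eEquiv.toEmbedding) := by
  rw [kcov_eq, kcov_eq]
  refine natCard_quot_congr
    (φ.vEquiv.subtypeEquiv (fun w => (iso_cov φ).symm)) _ _ ?_ ?_
  · rintro a b hab
    refine Quot.sound ?_
    obtain ⟨e, he, hz⟩ := iso_krel φ (S := S) hab
    exact ⟨e, he, hz⟩
  · rintro a b hab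
    refine Quot.sound ?_
    obtain ⟨e, he, hz⟩ := iso_krel' φ (S := S) hab
    exact ⟨e, he, hz⟩

lemma iso_covDisjoint (A B : Finset G.E) :
    G.CovDisjoint A B ↔
      H.CovDisjoint (A.map φ.eEquiv.toEmbedding) (B.map φ.eEquiv.toEmbedding) := by
  constructor
  · intro h w hA hB
    exact h (φ.vEquiv.symm w) ((iso_cov_symm φ).1 hA) ((iso_cov_symm φ).1 hB)
  · intro h w hA hB
    exact h (φ.vEquiv w) ((iso_cov φ).2 hA) ((iso_cov φ).2 hB)

lemma iso_term (A B : Finset G.E) :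
    G.term A B = H.term (A.map φ.eEquiv.toEmbedding) (B.map φ.eEquiv.toEmbedding) := by
  simp only [Multigraph.term]
  by_cases h : G.CovDisjoint A B
  · rw [if_pos h, if_pos ((iso_covDisjoint φ A B).1 h), ← Finset.map_union,
      ← iso_k φ (A ∪ B), ← iso_kcov φ B, Finset.card_map, Finset.card_map]
  · rw [if_neg h, if_neg (fun h' => h ((iso_covDisjoint φ A B).2 h'))]

lemma xi_iso (φ : G.Iso H) : G.xi (X 0 : MvPolynomial (Fin 3) ℤ) (X 1) (X 2) = H.xi (X 0) (X 1) (X 2) := by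
  rw [xi_eq, xi_eq]
  refine Fintype.sum_equiv (Equiv.finsetCongr φ.eEquiv) _ _ (fun A => ?_)
  refine Fintype.sum_equiv (Equiv.finsetCongr φ.eEquiv) _ _ (fun B => ?_)
  rw [Equiv.finsetCongr_apply, Equiv.finsetCongr_apply]
  exact iso_term φ A B

end Iso
end Multigraph
namespace Multigraph
open MvPolynomial

variable {G : Multigraph}

/-- `Quot.eq` helper: the covered components of `B` inject into components of `A ∪ B`. -/
lemma kcov_le_k {A B : Finset G.E} (h : G.CovDisjoint A B) : G.kcov B ≤ G.k (A ∪ B) := by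
  classical
  rw [kcov_eq, k_eq]
  have key : ∀ x y : G.V, Relation.EqvGen (G.krel (A ∪ B)) x y →
      (G.Cov B x ↔ G.Cov B y) ∧
      ∀ (hx : G.Cov B x) (hy : G.Cov B y),
        Quot.mk (G.ckrel B) ⟨x, hx⟩ = Quot.mk (G.ckrel B) ⟨y, hy⟩ := by
    intro x y hxy
    induction hxy with
    | rel x y hr =>
      obtain ⟨e, he, hz⟩ := hr
      have hxe : x ∈ G.ends e := by rw [hz]; exact Sym2.mem_mk_left x y
      have hye : y ∈ G.ends e := by rw [hz]; exact Sym2.mem_mk_right x y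
      have heB : (G.Cov B x ∨ G.Cov B y) → e ∈ B := by
        intro hc
        rcases Finset.mem_union.1 he with heA | heB
        · exfalso
          rcases hc with hc | hc
          · exact h x ⟨e, heA, hxe⟩ hc
          · exact h y ⟨e, heA, hye⟩ hc
        · exact heB
      constructor
      · constructor
        · intro hc; exact ⟨e, heB (Or.inl hc), hye⟩
        · intro hc; exact ⟨e, heB (Or.inr hc), hxe⟩
      · intro hx hy
        exact Quot.sound ⟨e, heB (Or.inl hx), hz⟩
    | refl x => exact ⟨Iff.rfl, fun hx hy => mkc_eq_of_eq rfl⟩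
    | symm x y _ ih => exact ⟨ih.1.symm, fun hx hy => (ih.2 hy hx).symm⟩
    | trans x y z _ _ ih₁ ih₂ =>
      refine ⟨ih₁.1.trans ih₂.1, fun hx hz => ?_⟩
      have hy := ih₁.1.mp hx
      exact (ih₁.2 hx hy).trans (ih₂.2 hy hz)
  apply Nat.card_le_card_of_injective
    (f := Quot.lift (fun w : {w : G.V // G.Cov B w} => Quot.mk (G.krel (A ∪ B)) w.val)
      (fun a b hab => Quot.sound (by
        obtain ⟨e, he, hz⟩ := hab
        exact ⟨e, Finset.mem_union_right _ he, hz⟩)))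
  rintro ⟨⟨a, ha⟩⟩ ⟨⟨b, hb⟩⟩ hab
  have : Relation.EqvGen (G.krel (A ∪ B)) a b := Quot.eq.1 hab
  exact (key a b this).2 ha hb

section DisjUnion
variable {G₁ G₂ : Multigraph} {S₁ A₁ B₁ : Finset G₁.E} {S₂ A₂ B₂ : Finset G₂.E}

lemma du_cov_inl {w : G₁.V} :
    (G₁.disjUnion G₂).Cov (S₁.disjSum S₂) (Sum.inl w) ↔ G₁.Cov S₁ w := by
  constructor
  · rintro ⟨(e₁ | e₂), he, hmem⟩
    · replace he := Finset.inl_mem_disjSum.1 he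
      obtain ⟨a, ha, hae⟩ := Sym2.mem_map.1 hmem
      exact ⟨e₁, he, (Sum.inl_injective hae) ▸ ha⟩
    · obtain ⟨a, _, hae⟩ := Sym2.mem_map.1 hmem
      exact absurd hae (by simp)
  · rintro ⟨e, he, hm⟩
    exact ⟨Sum.inl e, Finset.inl_mem_disjSum.2 he, Sym2.mem_map.2 ⟨w, hm, rfl⟩⟩

lemma du_cov_inr {w : G₂.V} :
    (G₁.disjUnion G₂).Cov (S₁.disjSum S₂) (Sum.inr w) ↔ G₂.Cov S₂ w := by
  constructor
  · rintro ⟨(e₁ | e₂), he, hmem⟩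
    · obtain ⟨a, _, hae⟩ := Sym2.mem_map.1 hmem
      exact absurd hae (by simp)
    · replace he := Finset.inr_mem_disjSum.1 he
      obtain ⟨a, ha, hae⟩ := Sym2.mem_map.1 hmem
      exact ⟨e₂, he, (Sum.inr_injective hae) ▸ ha⟩
  · rintro ⟨e, he, hm⟩
    exact ⟨Sum.inr e, Finset.inr_mem_disjSum.2 he, Sym2.mem_map.2 ⟨w, hm, rfl⟩⟩

lemma du_krel_inl {a b : G₁.V} :
    (G₁.disjUnion G₂).krel (S₁.disjSum S₂) (Sum.inl a) (Sum.inl b) ↔ G₁.krel S₁ a b := by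
  constructor
  · rintro ⟨(e₁ | e₂), he, hz⟩
    · replace he := Finset.inl_mem_disjSum.1 he
      refine ⟨e₁, he, ?_⟩
      apply Sym2.map.injective (Sum.inl_injective (β := G₂.V))
      rw [Sym2.map_pair_eq]
      exact hz
    · exfalso
      have : Sum.inl a ∈ (G₂.ends e₂).map Sum.inr := by
        rw [show ((G₁.disjUnion G₂).ends (Sum.inr e₂)) = (G₂.ends e₂).map Sum.inr from rfl] at hz
        rw [hz]; exact Sym2.mem_mk_left _ _
      obtain ⟨c, _, hc⟩ := Sym2.mem_map.1 this
      simp at hc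
  · rintro ⟨e, he, hz⟩
    exact ⟨Sum.inl e, Finset.inl_mem_disjSum.2 he,
      by rw [show ((G₁.disjUnion G₂).ends (Sum.inl e)) = (G₁.ends e).map Sum.inl from rfl,
        hz, Sym2.map_pair_eq]; rfl⟩

lemma du_krel_inr {a b : G₂.V} :
    (G₁.disjUnion G₂).krel (S₁.disjSum S₂) (Sum.inr a) (Sum.inr b) ↔ G₂.krel S₂ a b := by
  constructor
  · rintro ⟨(e₁ | e₂), he, hz⟩
    · exfalso
      have : Sum.inr a ∈ (G₁.ends e₁).map Sum.inl := by
        rw [show ((G₁.disjUnion G₂).ends (Sum.inl e₁)) = (G₁.ends e₁).map Sum.inl from rfl] at hz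
        rw [hz]; exact Sym2.mem_mk_left _ _
      obtain ⟨c, _, hc⟩ := Sym2.mem_map.1 this
      simp at hc
    · replace he := Finset.inr_mem_disjSum.1 he
      refine ⟨e₂, he, ?_⟩
      apply Sym2.map.injective (Sum.inr_injective (α := G₁.V))
      rw [Sym2.map_pair_eq]
      exact hz
  · rintro ⟨e, he, hz⟩
    exact ⟨Sum.inr e, Finset.inr_mem_disjSum.2 he,
      by rw [show ((G₁.disjUnion G₂).ends (Sum.inr e)) = (G₂.ends e).map Sum.inr from rfl,
        hz, Sym2.map_pair_eq]; rfl⟩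

lemma du_krel_not_lr {a : G₁.V} {b : G₂.V} :
    ¬ (G₁.disjUnion G₂).krel (S₁.disjSum S₂) (Sum.inl a) (Sum.inr b) := by
  rintro ⟨(e₁ | e₂), he, hz⟩
  · have : Sum.inr b ∈ (G₁.ends e₁).map Sum.inl := by
      rw [show ((G₁.disjUnion G₂).ends (Sum.inl e₁)) = (G₁.ends e₁).map Sum.inl from rfl] at hz
      rw [hz]; exact Sym2.mem_mk_right _ _
    obtain ⟨c, _, hc⟩ := Sym2.mem_map.1 this
    simp at hc
  · have : Sum.inl a ∈ (G₂.ends e₂).map Sum.inr := by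
      rw [show ((G₁.disjUnion G₂).ends (Sum.inr e₂)) = (G₂.ends e₂).map Sum.inr from rfl] at hz
      rw [hz]; exact Sym2.mem_mk_left _ _
    obtain ⟨c, _, hc⟩ := Sym2.mem_map.1 this
    simp at hc

lemma du_krel_not_rl {a : G₂.V} {b : G₁.V} :
    ¬ (G₁.disjUnion G₂).krel (S₁.disjSum S₂) (Sum.inr a) (Sum.inl b) := by
  intro h
  exact du_krel_not_lr (krel_symm h)

lemma du_k : (G₁.disjUnion G₂).k (S₁.disjSum S₂) = G₁.k S₁ + G₂.k S₂ := by
  erw [k_eq, k_eq, k_eq]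
  exact natCard_quot_sum _ _ _ (fun a b => du_krel_inl) (fun a b => du_krel_inr)
    (fun a b => du_krel_not_lr) (fun a b => du_krel_not_rl)

lemma du_kcov : (G₁.disjUnion G₂).kcov (S₁.disjSum S₂) = G₁.kcov S₁ + G₂.kcov S₂ := by
  classical
  erw [kcov_eq, kcov_eq, kcov_eq]
  set du := G₁.disjUnion G₂
  set S := S₁.disjSum S₂
  set j : {a : G₁.V // du.Cov S (Sum.inl a)} ⊕ {b : G₂.V // du.Cov S (Sum.inr b)} → du.V :=
    Sum.elim (fun a => Sum.inl a.val) (fun b => Sum.inr b.val) with hj_def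
  set r' : ({a : G₁.V // du.Cov S (Sum.inl a)} ⊕ {b : G₂.V // du.Cov S (Sum.inr b)}) →
      ({a : G₁.V // du.Cov S (Sum.inl a)} ⊕ {b : G₂.V // du.Cov S (Sum.inr b)}) → Prop :=
    fun x y => du.krel S (j x) (j y) with hr'_def
  have hj1 : ∀ x : {w : du.V // du.Cov S w}, j (Equiv.subtypeSum x) = x.val := by
    rintro ⟨(a | b), h⟩ <;> rfl
  have hj2 : ∀ x, ((Equiv.subtypeSum (p := fun w => du.Cov S w)).symm x).val = j x := by
    rintro (a | b) <;> rfl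
  have step1 : Nat.card (Quot (du.ckrel S)) = Nat.card (Quot r') := by
    refine natCard_quot_congr Equiv.subtypeSum _ _ ?_ ?_
    · intro a b hab
      refine Quot.sound ?_
      show du.krel S _ _
      erw [hj1, hj1]
      exact hab
    · intro a b hab
      refine Quot.sound ?_
      show du.krel S _ _
      rw [hj2, hj2]
      exact hab
  rw [step1]
  have step2 : Nat.card (Quot r') =
      Nat.card (Quot (fun x y : {a : G₁.V // du.Cov S (Sum.inl a)} => G₁.krel S₁ x.val y.val)) +
      Nat.card (Quot (fun x y : {b : G₂.V // du.Cov S (Sum.inr b)} => G₂.krel S₂ x.val y.val)) := by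
    refine natCard_quot_sum _ _ _ ?_ ?_ ?_ ?_
    · intro a b; exact du_krel_inl
    · intro a b; exact du_krel_inr
    · intro a b; exact du_krel_not_lr
    · intro a b; exact du_krel_not_rl
  rw [step2]
  congr 1
  · refine natCard_quot_congr (Equiv.subtypeEquivRight (fun w => du_cov_inl)) _ _ ?_ ?_
    · intro a b hab; exact Quot.sound hab
    · intro a b hab; exact Quot.sound hab
  · refine natCard_quot_congr (Equiv.subtypeEquivRight (fun w => du_cov_inr)) _ _ ?_ ?_
    · intro a b hab; exact Quot.sound hab
    · intro a b hab; exact Quot.sound hab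

lemma du_covDisjoint :
    (G₁.disjUnion G₂).CovDisjoint (A₁.disjSum A₂) (B₁.disjSum B₂) ↔
      G₁.CovDisjoint A₁ B₁ ∧ G₂.CovDisjoint A₂ B₂ := by
  constructor
  · intro h
    exact ⟨fun v hA hB => h (Sum.inl v) (du_cov_inl.2 hA) (du_cov_inl.2 hB),
      fun v hA hB => h (Sum.inr v) (du_cov_inr.2 hA) (du_cov_inr.2 hB)⟩
  · rintro ⟨h1, h2⟩ (w | w) hA hB
    · exact h1 w (du_cov_inl.1 hA) (du_cov_inl.1 hB)
    · exact h2 w (du_cov_inr.1 hA) (du_cov_inr.1 hB)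

lemma du_union :
    (A₁.disjSum A₂) ∪ (B₁.disjSum B₂) = (A₁ ∪ B₁).disjSum (A₂ ∪ B₂) := by
  ext (x | x) <;> simp

lemma du_term :
    (G₁.disjUnion G₂).term (A₁.disjSum A₂) (B₁.disjSum B₂) = G₁.term A₁ B₁ * G₂.term A₂ B₂ := by
  simp only [Multigraph.term]
  by_cases h : G₁.CovDisjoint A₁ B₁ ∧ G₂.CovDisjoint A₂ B₂
  · erw [if_pos (du_covDisjoint.2 h), if_pos h.1, if_pos h.2, du_union, du_k, du_kcov,
      Finset.card_disjSum, Finset.card_disjSum]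
    have e1 : G₁.kcov B₁ ≤ G₁.k (A₁ ∪ B₁) := kcov_le_k h.1
    have e2 : G₂.kcov B₂ ≤ G₂.k (A₂ ∪ B₂) := kcov_le_k h.2
    have e3 : G₁.kcov B₁ ≤ B₁.card := kcov_le_card G₁ B₁
    have e4 : G₂.kcov B₂ ≤ B₂.card := kcov_le_card G₂ B₂
    rw [show G₁.k (A₁ ∪ B₁) + G₂.k (A₂ ∪ B₂) - (G₁.kcov B₁ + G₂.kcov B₂)
        = (G₁.k (A₁ ∪ B₁) - G₁.kcov B₁) + (G₂.k (A₂ ∪ B₂) - G₂.kcov B₂) from by omega,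
      show A₁.card + A₂.card + (B₁.card + B₂.card) - (G₁.kcov B₁ + G₂.kcov B₂)
        = (A₁.card + B₁.card - G₁.kcov B₁) + (A₂.card + B₂.card - G₂.kcov B₂) from by omega,
      pow_add, pow_add, pow_add]
    ring
  · rw [if_neg (fun h' => h (du_covDisjoint.1 h'))]
    rcases not_and_or.1 h with h' | h'
    · rw [if_neg h', zero_mul]
    · rw [if_neg h', mul_zero]

/-- disjSum as an equivalence of finset types. -/
def finsetSumEquiv (α β : Type*) :
    Finset α × Finset β ≃ Finset (α ⊕ β) where
  toFun p := p.1.disjSum p.2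
  invFun S := (S.toLeft, S.toRight)
  left_inv p := by simp
  right_inv S := Finset.toLeft_disjSum_toRight

lemma xi_disjUnion (G₁ G₂ : Multigraph) :
    (G₁.disjUnion G₂).xi (X 0 : MvPolynomial (Fin 3) ℤ) (X 1) (X 2) =
      G₁.xi (X 0) (X 1) (X 2) * G₂.xi (X 0) (X 1) (X 2) := by
  rw [xi_eq, xi_eq, xi_eq]
  have inner : ∀ p : Finset G₁.E × Finset G₂.E,
      (∑ q : Finset G₁.E × Finset G₂.E, (G₁.term p.1 q.1) * (G₂.term p.2 q.2)) =
      ∑ B : Finset (G₁.disjUnion G₂).E, (G₁.disjUnion G₂).term (p.1.disjSum p.2) B := by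
    intro p
    exact Fintype.sum_equiv (finsetSumEquiv G₁.E G₂.E)
      (fun q => (G₁.term p.1 q.1) * (G₂.term p.2 q.2))
      (fun B => (G₁.disjUnion G₂).term (p.1.disjSum p.2) B)
      (fun q => du_term.symm)
  have step1 : (∑ A : Finset (G₁.disjUnion G₂).E, ∑ B : Finset (G₁.disjUnion G₂).E,
      (G₁.disjUnion G₂).term A B) =
      ∑ p : Finset G₁.E × Finset G₂.E, ∑ q : Finset G₁.E × Finset G₂.E,
        (G₁.term p.1 q.1) * (G₂.term p.2 q.2) := by
    refine Eq.symm (Fintype.sum_equiv (finsetSumEquiv G₁.E G₂.E)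
      (fun p => ∑ q : Finset G₁.E × Finset G₂.E, (G₁.term p.1 q.1) * (G₂.term p.2 q.2))
      (fun A => ∑ B : Finset (G₁.disjUnion G₂).E, (G₁.disjUnion G₂).term A B)
      (fun p => ?_))
    exact inner p
  rw [step1, Finset.sum_mul_sum, Fintype.sum_prod_type]
  refine Finset.sum_congr rfl (fun A₁ _ => ?_)
  refine Finset.sum_congr rfl (fun A₂ _ => ?_)
  rw [Fintype.sum_prod_type, Finset.sum_mul_sum]

end DisjUnion
end Multigraph
namespace Multigraph
open MvPolynomial

variable {G : Multigraph}

/-! ### Deletion -/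

section Delete
variable {e : G.E}

lemma subtype_union {p : G.E → Prop} [DecidablePred p] (A B : Finset G.E) :
    (A ∪ B).subtype p = A.subtype p ∪ B.subtype p := by
  ext ⟨x, hx⟩
  simp [Finset.mem_subtype]

lemma card_subtype_of_forall {p : G.E → Prop} [DecidablePred p] {A : Finset G.E}
    (h : ∀ x ∈ A, p x) : (A.subtype p).card = A.card := by
  rw [Finset.card_subtype, Finset.filter_eq_self.2 h]

lemma del_cov {S : Finset G.E} (hS : e ∉ S) {w : G.V} :
    (G.deleteEdge e).Cov (S.subtype (· ≠ e)) w ↔ G.Cov S w := by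
  constructor
  · rintro ⟨f, hf, hw⟩
    exact ⟨f.val, Finset.mem_subtype.1 hf, hw⟩
  · rintro ⟨f, hf, hw⟩
    exact ⟨⟨f, fun hfe => hS (hfe ▸ hf)⟩, Finset.mem_subtype.2 hf, hw⟩

lemma del_krel {S : Finset G.E} (hS : e ∉ S) {a b : G.V} :
    (G.deleteEdge e).krel (S.subtype (· ≠ e)) a b ↔ G.krel S a b := by
  constructor
  · rintro ⟨f, hf, hz⟩
    exact ⟨f.val, Finset.mem_subtype.1 hf, hz⟩
  · rintro ⟨f, hf, hz⟩
    exact ⟨⟨f, fun hfe => hS (hfe ▸ hf)⟩, Finset.mem_subtype.2 hf, hz⟩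

lemma del_k {S : Finset G.E} (hS : e ∉ S) :
    G.k S = (G.deleteEdge e).k (S.subtype (· ≠ e)) := by
  erw [k_eq, k_eq]
  exact natCard_quot_congr (Equiv.refl G.V) _ _
    (fun a b h => Quot.sound ((del_krel hS).2 h))
    (fun a b h => Quot.sound ((del_krel hS).1 h))

lemma del_kcov {S : Finset G.E} (hS : e ∉ S) :
    G.kcov S = (G.deleteEdge e).kcov (S.subtype (· ≠ e)) := by
  erw [kcov_eq, kcov_eq]
  refine natCard_quot_congr (Equiv.subtypeEquivRight (fun w => (del_cov hS).symm)) _ _ ?_ ?_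
  · rintro a b ⟨f, hf, hz⟩
    exact Quot.sound ⟨⟨f, fun hfe => hS (hfe ▸ hf)⟩, Finset.mem_subtype.2 hf, hz⟩
  · rintro a b ⟨f, hf, hz⟩
    exact Quot.sound ⟨f.val, Finset.mem_subtype.1 hf, hz⟩

lemma del_covDisjoint {A B : Finset G.E} (hA : e ∉ A) (hB : e ∉ B) :
    G.CovDisjoint A B ↔
      (G.deleteEdge e).CovDisjoint (A.subtype (· ≠ e)) (B.subtype (· ≠ e)) := by
  constructor
  · intro h w hwA hwB
    exact h w ((del_cov hA).1 hwA) ((del_cov hB).1 hwB)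
  · intro h w hwA hwB
    exact h w ((del_cov hA).2 hwA) ((del_cov hB).2 hwB)

lemma del_term {A B : Finset G.E} (hA : e ∉ A) (hB : e ∉ B) :
    G.term A B = (G.deleteEdge e).term (A.subtype (· ≠ e)) (B.subtype (· ≠ e)) := by
  classical
  simp only [Multigraph.term]
  by_cases h : G.CovDisjoint A B
  · erw [if_pos h, if_pos ((del_covDisjoint hA hB).1 h), ← subtype_union,
      ← del_k (by simp [hA, hB] : e ∉ A ∪ B), ← del_kcov hB,
      card_subtype_of_forall (p := fun x => x ≠ e) (fun x hx hxe => hA (hxe ▸ hx)),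
      card_subtype_of_forall (p := fun x => x ≠ e) (fun x hx hxe => hB (hxe ▸ hx))]
  · rw [if_neg h, if_neg (fun h' => h ((del_covDisjoint hA hB).2 h'))]

end Delete

/-! ### Contraction -/

section Contract
variable {e : G.E} {u v : G.V}

/-- The vertex projection of a contraction. -/
def cmap (G : Multigraph) (e : G.E) : G.V → (G.contractEdge e).V := fun w =>
  if h : w ∈ G.ends e then Sum.inr () else Sum.inl ⟨w, h⟩

lemma con_ends (f : (G.contractEdge e).E) :
    (G.contractEdge e).ends f = (G.ends f.val).map (G.cmap e) := rfl

lemma cmap_of_mem {w : G.V} (h : w ∈ G.ends e) : G.cmap e w = Sum.inr () := dif_pos h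

lemma cmap_of_not_mem {w : G.V} (h : w ∉ G.ends e) : G.cmap e w = Sum.inl ⟨w, h⟩ := dif_neg h

/-- Section of `cmap`, sending the contracted vertex to `u`. -/
def cinv (G : Multigraph) (e : G.E) (u : G.V) : (G.contractEdge e).V → G.V :=
  Sum.elim Subtype.val (fun _ => u)

lemma cinv_cmap {w : G.V} (h : w ∉ G.ends e) : G.cinv e u (G.cmap e w) = w := by
  rw [cmap_of_not_mem h]; rfl

lemma cmap_cinv (hu : u ∈ G.ends e) (x : (G.contractEdge e).V) :
    G.cmap e (G.cinv e u x) = x := by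
  rcases x with ⟨w, hw⟩ | ⟨⟩
  · exact cmap_of_not_mem hw
  · exact cmap_of_mem hu

lemma cmap_inj {p q : G.V} (hp : p ∉ G.ends e) (h : G.cmap e q = G.cmap e p) :
    q = p := by
  by_cases hq : q ∈ G.ends e
  · rw [cmap_of_mem hq, cmap_of_not_mem hp] at h
    exact absurd h (by simp)
  · rw [cmap_of_not_mem hq, cmap_of_not_mem hp] at h
    exact congrArg Subtype.val (Sum.inl_injective h)

lemma mk_cinv_cmap {S : Finset G.E} (heS : e ∈ S) (hu : u ∈ G.ends e) (w : G.V) :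
    Quot.mk (G.krel S) (G.cinv e u (G.cmap e w)) = Quot.mk (G.krel S) w := by
  by_cases h : w ∈ G.ends e
  · rw [cmap_of_mem h]
    exact mkv_eq_of_mem heS hu h
  · rw [cinv_cmap h]

lemma con_k {S : Finset G.E} (heS : e ∈ S) (hu : u ∈ G.ends e) :
    G.k S = (G.contractEdge e).k (S.subtype (· ≠ e)) := by
  classical
  erw [k_eq, k_eq]
  refine natCard_quot_eq_of_maps _ _ (G.cmap e) (G.cinv e u) ?_ ?_
    (fun w => mk_cinv_cmap heS hu w) (fun x => by rw [cmap_cinv hu])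
  · rintro a b ⟨f, hf, hz⟩
    by_cases hfe : f = e
    · subst hfe
      have ha : a ∈ G.ends f := by rw [hz]; exact Sym2.mem_mk_left _ _
      have hb : b ∈ G.ends f := by rw [hz]; exact Sym2.mem_mk_right _ _
      rw [cmap_of_mem ha, cmap_of_mem hb]
    · exact Quot.sound ⟨⟨f, hfe⟩, Finset.mem_subtype.2 hf,
        by erw [con_ends, hz, Sym2.map_pair_eq]⟩
  · rintro x y ⟨⟨f, hfe⟩, hf, hz⟩
    have hfS : f ∈ S := Finset.mem_subtype.1 hf
    obtain ⟨p, q, hpq⟩ := sym2_exists_pair (G.ends f)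
    erw [con_ends, hpq, Sym2.map_pair_eq, Sym2.eq_iff] at hz
    have key : ∀ p' q' : G.V, G.cmap e p' = x → G.cmap e q' = y → G.ends f = s(p', q') →
        Quot.mk (G.krel S) (G.cinv e u x) = Quot.mk (G.krel S) (G.cinv e u y) := by
      intro p' q' hp' hq' hf'
      rw [← hp', ← hq', mk_cinv_cmap heS hu, mk_cinv_cmap heS hu]
      exact Quot.sound ⟨f, hfS, hf'⟩
    rcases hz with ⟨h1, h2⟩ | ⟨h1, h2⟩
    · exact key p q h1 h2 hpq
    · exact key q p h2 h1 (hpq.trans Sym2.eq_swap)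

/-- `S` avoids the endpoints of `e`. -/
def Avoids (G : Multigraph) (e : G.E) (S : Finset G.E) : Prop :=
  ∀ f ∈ S, ∀ w ∈ G.ends f, w ∉ G.ends e

lemma not_mem_of_avoids {S : Finset G.E} (hu : u ∈ G.ends e) (hav : G.Avoids e S) :
    e ∉ S := fun heS => hav e heS u hu hu

lemma con_cov_fwd {S : Finset G.E} (hS : e ∉ S) {w : G.V} (hw : G.Cov S w) :
    (G.contractEdge e).Cov (S.subtype (· ≠ e)) (G.cmap e w) := by
  obtain ⟨f, hf, hwf⟩ := hw
  exact ⟨⟨f, fun hfe => hS (hfe ▸ hf)⟩, Finset.mem_subtype.2 hf,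
    by erw [con_ends]; exact Sym2.mem_map.2 ⟨w, hwf, rfl⟩⟩

lemma con_cov_bwd {S : Finset G.E} {x : (G.contractEdge e).V}
    (hx : (G.contractEdge e).Cov (S.subtype (· ≠ e)) x) :
    ∃ p : G.V, G.cmap e p = x ∧ G.Cov S p := by
  obtain ⟨⟨f, hfe⟩, hf, hxf⟩ := hx
  erw [con_ends] at hxf
  obtain ⟨p, hp, hpx⟩ := Sym2.mem_map.1 hxf
  exact ⟨p, hpx, ⟨f, Finset.mem_subtype.1 hf, hp⟩⟩

lemma con_kcov_avoid {S : Finset G.E} (hu : u ∈ G.ends e) (hav : G.Avoids e S) :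
    G.kcov S = (G.contractEdge e).kcov (S.subtype (· ≠ e)) := by
  classical
  have hS : e ∉ S := not_mem_of_avoids hu hav
  erw [kcov_eq, kcov_eq]
  refine natCard_quot_eq_of_maps _ _
    (fun w => (⟨G.cmap e w.val, con_cov_fwd hS w.2⟩ :
      {x : (G.contractEdge e).V // (G.contractEdge e).Cov (S.subtype (· ≠ e)) x}))
    (fun x => (⟨G.cinv e u x.val, by
      obtain ⟨p, hp, hpS⟩ := con_cov_bwd x.2
      have hpe : p ∉ G.ends e := by
        obtain ⟨f, hf, hpf⟩ := hpS
        exact hav f hf p hpf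
      rw [← hp, cinv_cmap hpe]
      exact hpS⟩ : {w : G.V // G.Cov S w}))
    ?_ ?_ ?_ ?_
  · rintro a b ⟨f, hf, hz⟩
    have hfe : f ≠ e := fun hfe => hS (hfe ▸ hf)
    exact Quot.sound ⟨⟨f, hfe⟩, Finset.mem_subtype.2 hf,
      by erw [con_ends, hz, Sym2.map_pair_eq]⟩
  · rintro x y ⟨⟨f, hfe⟩, hf, hz⟩
    have hfS : f ∈ S := Finset.mem_subtype.1 hf
    obtain ⟨p, q, hpq⟩ := sym2_exists_pair (G.ends f)
    erw [con_ends, hpq, Sym2.map_pair_eq, Sym2.eq_iff] at hz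
    have hpe : p ∉ G.ends e := hav f hfS p (by rw [hpq]; exact Sym2.mem_mk_left _ _)
    have hqe : q ∉ G.ends e := hav f hfS q (by rw [hpq]; exact Sym2.mem_mk_right _ _)
    refine Quot.sound ⟨f, hfS, ?_⟩
    show G.ends f = s(G.cinv e u x.val, G.cinv e u y.val)
    rcases hz with ⟨h1, h2⟩ | ⟨h1, h2⟩
    · rw [← h1, ← h2, cinv_cmap hpe, cinv_cmap hqe]
      exact hpq
    · rw [← h1, ← h2, cinv_cmap hqe, cinv_cmap hpe]
      exact hpq.trans Sym2.eq_swap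
  · intro a
    apply mkc_eq_of_eq
    show G.cinv e u (G.cmap e a.val) = a.val
    have : a.val ∉ G.ends e := by
      obtain ⟨f, hf, haf⟩ := a.2
      exact hav f hf a.val haf
    exact cinv_cmap this
  · intro x
    apply mkc_eq_of_eq
    show G.cmap e (G.cinv e u x.val) = x.val
    exact cmap_cinv hu x.val

/-- `S` touches the endpoints of `e` through an edge other than `e`. -/
def Touches (G : Multigraph) (e : G.E) (S : Finset G.E) : Prop :=
  ∃ f ∈ S, ∃ w ∈ G.ends f, w ∈ G.ends e

lemma con_kcov_touch {S : Finset G.E} (hu : u ∈ G.ends e) (heS : e ∈ S)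
    (htouch : ∃ f ∈ S, f ≠ e ∧ ∃ w ∈ G.ends f, w ∈ G.ends e) :
    G.kcov S = (G.contractEdge e).kcov (S.subtype (· ≠ e)) := by
  classical
  erw [kcov_eq, kcov_eq]
  have hfwd : ∀ w : {w : G.V // G.Cov S w},
      (G.contractEdge e).Cov (S.subtype (· ≠ e)) (G.cmap e w.val) := by
    rintro ⟨w, hw⟩
    by_cases hwe : w ∈ G.ends e
    · obtain ⟨f, hfS, hfe, w', hw'f, hw'e⟩ := htouch
      rw [cmap_of_mem hwe, ← cmap_of_mem hw'e]
      exact ⟨⟨f, hfe⟩, Finset.mem_subtype.2 hfS,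
        by erw [con_ends]; exact Sym2.mem_map.2 ⟨w', hw'f, rfl⟩⟩
    · obtain ⟨f, hfS, hwf⟩ := hw
      have hfe : f ≠ e := fun h => hwe (h ▸ hwf)
      exact ⟨⟨f, hfe⟩, Finset.mem_subtype.2 hfS,
        by erw [con_ends]; exact Sym2.mem_map.2 ⟨w, hwf, rfl⟩⟩
  have hbwd : ∀ x : {x : (G.contractEdge e).V //
      (G.contractEdge e).Cov (S.subtype (· ≠ e)) x}, G.Cov S (G.cinv e u x.val) := by
    rintro ⟨x, hx⟩
    obtain ⟨p, hp, hpS⟩ := con_cov_bwd hx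
    show G.Cov S (G.cinv e u x)
    by_cases hpe : p ∈ G.ends e
    · rw [← hp, cmap_of_mem hpe]
      exact ⟨e, heS, hu⟩
    · rw [← hp, cinv_cmap hpe]
      exact hpS
  have hmk : ∀ (w : G.V) (h1 : G.Cov S (G.cinv e u (G.cmap e w))) (h2 : G.Cov S w),
      Quot.mk (G.ckrel S) ⟨G.cinv e u (G.cmap e w), h1⟩ = Quot.mk (G.ckrel S) ⟨w, h2⟩ := by
    intro w h1 h2
    by_cases hwe : w ∈ G.ends e
    · refine mkc_eq_of_mem heS ?_ hwe
      show G.cinv e u (G.cmap e w) ∈ G.ends e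
      rw [cmap_of_mem hwe]
      exact hu
    · exact mkc_eq_of_eq (cinv_cmap hwe)
  refine natCard_quot_eq_of_maps _ _
    (fun w => ⟨G.cmap e w.val, hfwd w⟩)
    (fun x => ⟨G.cinv e u x.val, hbwd x⟩)
    ?_ ?_ (fun a => hmk a.val _ a.2) ?_
  · rintro a b ⟨f, hf, hz⟩
    by_cases hfe : f = e
    · apply mkc_eq_of_eq
      show G.cmap e a.val = G.cmap e b.val
      have ha : a.val ∈ G.ends e := by rw [← hfe, hz]; exact Sym2.mem_mk_left _ _
      have hb : b.val ∈ G.ends e := by rw [← hfe, hz]; exact Sym2.mem_mk_right _ _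
      rw [cmap_of_mem ha, cmap_of_mem hb]
    · exact Quot.sound ⟨⟨f, hfe⟩, Finset.mem_subtype.2 hf,
        by erw [con_ends, hz, Sym2.map_pair_eq]⟩
  · rintro x y ⟨⟨f, hfe⟩, hf, hz⟩
    have hfS : f ∈ S := Finset.mem_subtype.1 hf
    obtain ⟨p, q, hpq⟩ := sym2_exists_pair (G.ends f)
    erw [con_ends, hpq, Sym2.map_pair_eq, Sym2.eq_iff] at hz
    have key : ∀ (p' q' : G.V) (h1 : G.cmap e p' = x.val) (h2 : G.cmap e q' = y.val),
        G.ends f = s(p', q') →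
        Quot.mk (G.ckrel S) ⟨G.cinv e u x.val, hbwd x⟩ =
          Quot.mk (G.ckrel S) ⟨G.cinv e u y.val, hbwd y⟩ := by
      intro p' q' h1 h2 hf'
      have hp'S : G.Cov S p' := ⟨f, hfS, by rw [hf']; exact Sym2.mem_mk_left _ _⟩
      have hq'S : G.Cov S q' := ⟨f, hfS, by rw [hf']; exact Sym2.mem_mk_right _ _⟩
      have e1 : Quot.mk (G.ckrel S) ⟨G.cinv e u x.val, hbwd x⟩ =
          Quot.mk (G.ckrel S) ⟨p', hp'S⟩ := by
        have := hmk p' (by rw [h1]; exact hbwd x) hp'S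
        convert this using 3 <;> rw [h1]
      have e2 : Quot.mk (G.ckrel S) ⟨G.cinv e u y.val, hbwd y⟩ =
          Quot.mk (G.ckrel S) ⟨q', hq'S⟩ := by
        have := hmk q' (by rw [h2]; exact hbwd y) hq'S
        convert this using 3 <;> rw [h2]
      rw [e1, e2]
      exact Quot.sound ⟨f, hfS, hf'⟩
    rcases hz with ⟨h1, h2⟩ | ⟨h1, h2⟩
    · exact key p q h1 h2 hpq
    · exact key q p h2 h1 (hpq.trans Sym2.eq_swap)
  · intro x
    apply mkc_eq_of_eq
    show G.cmap e (G.cinv e u x.val) = x.val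
    exact cmap_cinv hu x.val

end Contract
end Multigraph
namespace Multigraph
open MvPolynomial

variable {G : Multigraph} {e : G.E} {u v : G.V}

/-! ### Contraction: CovDisjoint and term lemmas -/

lemma cov_mono {S T : Finset G.E} (hST : S ⊆ T) {w : G.V} (h : G.Cov S w) : G.Cov T w := by
  obtain ⟨f, hf, hw⟩ := h
  exact ⟨f, hST hf, hw⟩

lemma cov_insert_elim {S : Finset G.E} {w : G.V} (h : G.Cov (insert e S) w)
    (hwe : w ∉ G.ends e) : G.Cov S w := by
  obtain ⟨f, hf, hw⟩ := h
  rcases Finset.mem_insert.1 hf with rfl | hf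
  · exact absurd hw hwe
  · exact ⟨f, hf, hw⟩

lemma con_covD_left {A B : Finset G.E} (hA : e ∉ A) (hB : e ∉ B)
    (hav : G.Avoids e B) :
    G.CovDisjoint (insert e A) B ↔
      (G.contractEdge e).CovDisjoint (A.subtype (· ≠ e)) (B.subtype (· ≠ e)) := by
  constructor
  · intro h x hxA hxB
    obtain ⟨p, hp, hpB⟩ := con_cov_bwd hxB
    have hpe : p ∉ G.ends e := by
      obtain ⟨f, hf, hpf⟩ := hpB
      exact hav f hf p hpf
    obtain ⟨q, hq, hqA⟩ := con_cov_bwd hxA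
    have hqp : q = p := cmap_inj hpe (hq.trans hp.symm)
    exact h p (cov_mono (Finset.subset_insert e A) (hqp ▸ hqA)) hpB
  · intro h w hwA hwB
    have hwe : w ∉ G.ends e := by
      intro hwe
      obtain ⟨f, hf, hwf⟩ := hwB
      exact hav f hf w hwf hwe
    have hwA' : G.Cov A w := cov_insert_elim hwA hwe
    exact h (G.cmap e w) (con_cov_fwd hA hwA') (con_cov_fwd hB hwB)

lemma con_covD_right {A B : Finset G.E} (hA : e ∉ A) (hB : e ∉ B)
    (htouch : G.Touches e B) :
    G.CovDisjoint A (insert e B) ↔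
      (G.contractEdge e).CovDisjoint (A.subtype (· ≠ e)) (B.subtype (· ≠ e)) := by
  constructor
  · intro h x hxA hxB
    obtain ⟨q, hq, hqA⟩ := con_cov_bwd hxA
    by_cases hqe : q ∈ G.ends e
    · exact h q hqA ⟨e, Finset.mem_insert_self e B, hqe⟩
    · obtain ⟨p, hp, hpB⟩ := con_cov_bwd hxB
      by_cases hpe : p ∈ G.ends e
      · -- x = inr (), but x = cmap q = inl, contradiction
        rw [cmap_of_mem hpe] at hp
        rw [cmap_of_not_mem hqe] at hq
        rw [← hq] at hp
        exact absurd hp (by simp)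
      · have : p = q := cmap_inj hqe (hp.trans hq.symm)
        exact h q hqA (cov_mono (Finset.subset_insert e B) (this ▸ hpB))
  · intro h w hwA hwB
    by_cases hwe : w ∈ G.ends e
    · obtain ⟨f, hfB, w', hw'f, hw'e⟩ := htouch
      have h1 : (G.contractEdge e).Cov (A.subtype (· ≠ e)) (G.cmap e w) :=
        con_cov_fwd hA hwA
      have h2 : (G.contractEdge e).Cov (B.subtype (· ≠ e)) (G.cmap e w') :=
        con_cov_fwd hB ⟨f, hfB, hw'f⟩
      rw [cmap_of_mem hw'e] at h2
      rw [cmap_of_mem hwe] at h1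
      exact h _ h1 h2
    · have hwB' : G.Cov B w := cov_insert_elim hwB hwe
      exact h (G.cmap e w) (con_cov_fwd hA hwA) (con_cov_fwd hB hwB')

lemma insert_union_left (A B : Finset G.E) : (insert e A) ∪ B = insert e (A ∪ B) := by
  ext x; simp [or_assoc]

lemma union_insert_right (A B : Finset G.E) : A ∪ (insert e B) = insert e (A ∪ B) := by
  ext x; simp

lemma subtype_insert_self (S : Finset G.E) :
    ((insert e S).subtype (· ≠ e)) = S.subtype (· ≠ e) := by
  ext ⟨x, hx⟩
  simp [Finset.mem_subtype, hx]

lemma card_subtype_ne {S : Finset G.E} (hS : e ∉ S) :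
    (S.subtype (· ≠ e)).card = S.card :=
  card_subtype_of_forall (p := fun x => x ≠ e) (fun x hx hxe => hS (hxe ▸ hx))

lemma term_con_left {A B : Finset G.E} (hu : u ∈ G.ends e) (hA : e ∉ A) (hB : e ∉ B)
    (hav : G.Avoids e B) :
    G.term (insert e A) B =
      X 1 * (G.contractEdge e).term (A.subtype (· ≠ e)) (B.subtype (· ≠ e)) := by
  classical
  simp only [Multigraph.term]
  by_cases h : G.CovDisjoint (insert e A) B
  · rw [if_pos h, if_pos ((con_covD_left hA hB hav).1 h)]
    have hk : G.k (insert e A ∪ B) =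
        (G.contractEdge e).k ((A.subtype (· ≠ e)) ∪ (B.subtype (· ≠ e))) := by
      erw [insert_union_left, con_k (Finset.mem_insert_self e (A ∪ B)) hu,
        subtype_insert_self, subtype_union]; rfl
    have hkc : G.kcov B = (G.contractEdge e).kcov (B.subtype (· ≠ e)) :=
      con_kcov_avoid hu hav
    erw [hk, hkc, Finset.card_insert_of_notMem hA, card_subtype_ne hA, card_subtype_ne hB]
    have hle : (G.contractEdge e).kcov (B.subtype (· ≠ e)) ≤ B.card := by
      rw [← card_subtype_ne hB]
      exact kcov_le_card _ _
    rw [show A.card + 1 + B.card - (G.contractEdge e).kcov (B.subtype (· ≠ e))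
        = (A.card + B.card - (G.contractEdge e).kcov (B.subtype (· ≠ e))) + 1 from by omega,
      pow_succ]
    ring
  · rw [if_neg h, if_neg (fun h' => h ((con_covD_left hA hB hav).2 h')), mul_zero]

lemma term_con_right {A B : Finset G.E} (hu : u ∈ G.ends e) (hA : e ∉ A) (hB : e ∉ B)
    (htouch : G.Touches e B) :
    G.term A (insert e B) =
      X 1 * (G.contractEdge e).term (A.subtype (· ≠ e)) (B.subtype (· ≠ e)) := by
  classical
  simp only [Multigraph.term]
  by_cases h : G.CovDisjoint A (insert e B)
  · rw [if_pos h, if_pos ((con_covD_right hA hB htouch).1 h)]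
    have hk : G.k (A ∪ insert e B) =
        (G.contractEdge e).k ((A.subtype (· ≠ e)) ∪ (B.subtype (· ≠ e))) := by
      erw [union_insert_right, con_k (Finset.mem_insert_self e (A ∪ B)) hu,
        subtype_insert_self, subtype_union]; rfl
    have hkc : G.kcov (insert e B) = (G.contractEdge e).kcov (B.subtype (· ≠ e)) := by
      obtain ⟨f, hfB, hw⟩ := htouch
      rw [← subtype_insert_self (S := B)]
      exact con_kcov_touch hu (Finset.mem_insert_self e B)
        ⟨f, Finset.mem_insert_of_mem hfB, fun hfe => hB (hfe ▸ hfB), hw⟩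
    erw [hk, hkc, Finset.card_insert_of_notMem hB, card_subtype_ne hA, card_subtype_ne hB]
    have hle : (G.contractEdge e).kcov (B.subtype (· ≠ e)) ≤ B.card := by
      rw [← card_subtype_ne hB]
      exact kcov_le_card _ _
    rw [show A.card + (B.card + 1) - (G.contractEdge e).kcov (B.subtype (· ≠ e))
        = (A.card + B.card - (G.contractEdge e).kcov (B.subtype (· ≠ e))) + 1 from by omega,
      pow_succ]
    ring
  · rw [if_neg h, if_neg (fun h' => h ((con_covD_right hA hB htouch).2 h')), mul_zero]

/-! ### Extraction -/

/-- The defining predicate for edges of `extractEdge`. -/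
def pex (G : Multigraph) (e : G.E) : G.E → Prop :=
  fun f => ∀ w : G.V, w ∈ G.ends f → w ∉ G.ends e

instance (G : Multigraph) (e : G.E) : DecidablePred (G.pex e) := by
  unfold pex; infer_instance

lemma ex_ends_eq {f : (G.extractEdge e).E} {x y : (G.extractEdge e).V} :
    (G.extractEdge e).ends f = s(x, y) ↔ G.ends f.val = s(x.val, y.val) := by
  constructor
  · intro h
    have := congrArg (Sym2.map Subtype.val) h
    erw [show (G.extractEdge e).ends f = (G.ends f.val).attachWith (fun w hw => f.prop w hw)
      from rfl, Sym2.attachWith_map_subtypeVal, Sym2.map_pair_eq] at this; exact this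
  · intro h
    apply Sym2.map.injective (Subtype.val_injective)
    erw [show (G.extractEdge e).ends f = (G.ends f.val).attachWith (fun w hw => f.prop w hw)
      from rfl, Sym2.attachWith_map_subtypeVal, Sym2.map_pair_eq]
    exact h

lemma ex_mem_ends {f : (G.extractEdge e).E} {x : (G.extractEdge e).V} :
    x ∈ (G.extractEdge e).ends f ↔ x.val ∈ G.ends f.val := by
  constructor
  · intro h
    have : x.val ∈ ((G.extractEdge e).ends f).map Subtype.val :=
      Sym2.mem_map.2 ⟨x, h, rfl⟩
    rwa [show (G.extractEdge e).ends f = (G.ends f.val).attachWith (fun w hw => f.prop w hw)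
      from rfl, Sym2.attachWith_map_subtypeVal] at this
  · intro h
    have : x.val ∈ ((G.extractEdge e).ends f).map Subtype.val := by
      rwa [show (G.extractEdge e).ends f = (G.ends f.val).attachWith (fun w hw => f.prop w hw)
        from rfl, Sym2.attachWith_map_subtypeVal]
    obtain ⟨y, hy, hyx⟩ := Sym2.mem_map.1 this
    rwa [Subtype.ext hyx] at hy

lemma ex_cov {S : Finset G.E} (hS : ∀ f ∈ S, G.pex e f) {x : (G.extractEdge e).V} :
    (G.extractEdge e).Cov (S.subtype (G.pex e)) x ↔ G.Cov S x.val := by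
  constructor
  · rintro ⟨f, hf, hxf⟩
    exact ⟨f.val, Finset.mem_subtype.1 hf, ex_mem_ends.1 hxf⟩
  · rintro ⟨f, hf, hxf⟩
    exact ⟨⟨f, hS f hf⟩, Finset.mem_subtype.2 hf, ex_mem_ends.2 hxf⟩

lemma ex_covD {A B : Finset G.E} (hu : u ∈ G.ends e)
    (hA : ∀ f ∈ A, G.pex e f) (hB : ∀ f ∈ B, G.pex e f) :
    G.CovDisjoint A (insert e B) ↔
      (G.extractEdge e).CovDisjoint (A.subtype (G.pex e)) (B.subtype (G.pex e)) := by
  constructor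
  · intro h x hxA hxB
    exact h x.val ((ex_cov hA).1 hxA)
      (cov_mono (Finset.subset_insert e B) ((ex_cov hB).1 hxB))
  · intro h w hwA hwB
    have hwe : w ∉ G.ends e := by
      intro hwe
      obtain ⟨f, hf, hwf⟩ := hwA
      exact hA f hf w hwf hwe
    have hwB' : G.Cov B w := cov_insert_elim hwB hwe
    exact h ⟨w, hwe⟩ ((ex_cov hA).2 hwA) ((ex_cov hB).2 hwB')

lemma ex_k {S : Finset G.E} (hu : u ∈ G.ends e) (hS : ∀ f ∈ S, G.pex e f) :
    G.k (insert e S) = (G.extractEdge e).k (S.subtype (G.pex e)) + 1 := by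
  classical
  erw [k_eq, k_eq]
  refine natCard_quot_split _ _ (fun w => w ∈ G.ends e)
    (fun w hw => (⟨w, hw⟩ : (G.extractEdge e).V)) Subtype.val u hu ?_ ?_ ?_ ?_ ?_ ?_
  · rintro a b ⟨f, hf, hz⟩
    rcases Finset.mem_insert.1 hf with rfl | hf
    · exact Or.inl ⟨by rw [hz]; exact Sym2.mem_mk_left _ _,
        by rw [hz]; exact Sym2.mem_mk_right _ _⟩
    · have ha : a ∉ G.ends e := hS f hf a (by rw [hz]; exact Sym2.mem_mk_left _ _)
      have hb : b ∉ G.ends e := hS f hf b (by rw [hz]; exact Sym2.mem_mk_right _ _)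
      exact Or.inr ⟨ha, hb, Quot.sound ⟨⟨f, hS f hf⟩, Finset.mem_subtype.2 hf,
        ex_ends_eq.2 hz⟩⟩
  · intro a ha
    exact mkv_eq_of_mem (Finset.mem_insert_self e S) ha hu
  · rintro x y ⟨f, hf, hz⟩
    exact Quot.sound ⟨f.val, Finset.mem_insert_of_mem (Finset.mem_subtype.1 hf),
      ex_ends_eq.1 hz⟩
  · exact fun b => b.2
  · intro b
    rfl
  · intro a h
    rfl

lemma ex_kcov {S : Finset G.E} (hu : u ∈ G.ends e) (hS : ∀ f ∈ S, G.pex e f) :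
    G.kcov (insert e S) = (G.extractEdge e).kcov (S.subtype (G.pex e)) + 1 := by
  classical
  erw [kcov_eq, kcov_eq]
  have hfwd : ∀ (w : {w : G.V // G.Cov (insert e S) w}) (h : w.val ∉ G.ends e),
      (G.extractEdge e).Cov (S.subtype (G.pex e)) ⟨w.val, h⟩ := by
    rintro ⟨w, hw⟩ h
    exact (ex_cov hS).2 (cov_insert_elim hw h)
  have hbwd : ∀ x : {x : (G.extractEdge e).V //
      (G.extractEdge e).Cov (S.subtype (G.pex e)) x}, G.Cov (insert e S) x.val.val :=
    fun x => cov_mono (Finset.subset_insert e S) ((ex_cov hS).1 x.2)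
  refine natCard_quot_split _ _ (fun w => w.val ∈ G.ends e)
    (fun w hw => ⟨⟨w.val, hw⟩, hfwd w hw⟩)
    (fun x => ⟨x.val.val, hbwd x⟩)
    ⟨u, ⟨e, Finset.mem_insert_self e S, hu⟩⟩ hu ?_ ?_ ?_ ?_ ?_ ?_
  · rintro a b ⟨f, hf, hz⟩
    rcases Finset.mem_insert.1 hf with rfl | hf
    · exact Or.inl ⟨by rw [hz]; exact Sym2.mem_mk_left _ _,
        by rw [hz]; exact Sym2.mem_mk_right _ _⟩
    · have ha : a.val ∉ G.ends e := hS f hf a.val (by rw [hz]; exact Sym2.mem_mk_left _ _)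
      have hb : b.val ∉ G.ends e := hS f hf b.val (by rw [hz]; exact Sym2.mem_mk_right _ _)
      refine Or.inr ⟨ha, hb, Quot.sound ⟨⟨f, hS f hf⟩, Finset.mem_subtype.2 hf, ?_⟩⟩
      exact ex_ends_eq.2 hz
  · intro a ha
    exact mkc_eq_of_mem (Finset.mem_insert_self e S) ha hu
  · rintro x y ⟨f, hf, hz⟩
    exact Quot.sound ⟨f.val, Finset.mem_insert_of_mem (Finset.mem_subtype.1 hf),
      ex_ends_eq.1 hz⟩
  · exact fun b => b.val.2
  · intro b
    apply mkc_eq_of_eq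
    rfl
  · intro a h
    apply mkc_eq_of_eq
    rfl

lemma term_ex {A B : Finset G.E} (hu : u ∈ G.ends e)
    (hA : ∀ f ∈ A, G.pex e f) (hB : ∀ f ∈ B, G.pex e f) :
    G.term A (insert e B) =
      X 2 * (G.extractEdge e).term (A.subtype (G.pex e)) (B.subtype (G.pex e)) := by
  classical
  have hAe : e ∉ A := fun h => hA e h u hu hu
  have hBe : e ∉ B := fun h => hB e h u hu hu
  simp only [Multigraph.term]
  by_cases h : G.CovDisjoint A (insert e B)
  · rw [if_pos h, if_pos ((ex_covD hu hA hB).1 h)]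
    have hk : G.k (A ∪ insert e B) =
        (G.extractEdge e).k ((A.subtype (G.pex e)) ∪ (B.subtype (G.pex e))) + 1 := by
      erw [union_insert_right, ex_k hu (fun f hf => by
        rcases Finset.mem_union.1 hf with hf | hf
        · exact hA f hf
        · exact hB f hf), subtype_union]; rfl
    have hkc : G.kcov (insert e B) = (G.extractEdge e).kcov (B.subtype (G.pex e)) + 1 :=
      ex_kcov hu hB
    erw [hk, hkc, Finset.card_insert_of_notMem hBe,
      card_subtype_of_forall (p := G.pex e) hA, card_subtype_of_forall (p := G.pex e) hB,
      Nat.succ_sub_succ,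
      show A.card + (B.card + 1) - ((G.extractEdge e).kcov (B.subtype (G.pex e)) + 1)
        = A.card + B.card - (G.extractEdge e).kcov (B.subtype (G.pex e)) from by omega,
      pow_succ]
    ring
  · rw [if_neg h, if_neg (fun h' => h ((ex_covD hu hA hB).2 h')), mul_zero]

/-! ### Vanishing terms -/

lemma term_zero_touch {A B : Finset G.E} (htouch : G.Touches e B) :
    G.term (insert e A) B = 0 := by
  obtain ⟨f, hfB, w, hwf, hwe⟩ := htouch
  rw [Multigraph.term, if_neg]
  intro h
  exact h w ⟨e, Finset.mem_insert_self e A, hwe⟩ ⟨f, hfB, hwf⟩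

lemma term_zero_touchA {A B : Finset G.E} (htouch : G.Touches e A) :
    G.term A (insert e B) = 0 := by
  obtain ⟨f, hfA, w, hwf, hwe⟩ := htouch
  rw [Multigraph.term, if_neg]
  intro h
  exact h w ⟨f, hfA, hwf⟩ ⟨e, Finset.mem_insert_self e B, hwe⟩

lemma term_zero_both {A B : Finset G.E} (hu : u ∈ G.ends e) :
    G.term (insert e A) (insert e B) = 0 := by
  rw [Multigraph.term, if_neg]
  intro h
  exact h u ⟨e, Finset.mem_insert_self e A, hu⟩ ⟨e, Finset.mem_insert_self e B, hu⟩

lemma not_touches_iff_avoids {S : Finset G.E} : ¬ G.Touches e S ↔ G.Avoids e S := by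
  unfold Touches Avoids
  push_neg
  rfl

end Multigraph
namespace Multigraph
open MvPolynomial Finset

variable {G : Multigraph}

section SumHelpers

variable {M : Type*} [AddCommMonoid M]

lemma sum_finset_split {α : Type*} [Fintype α] [DecidableEq α] (e : α) (f : Finset α → M) :
    ∑ A : Finset α, f A =
      ∑ A₀ ∈ (Finset.univ.erase e).powerset, (f A₀ + f (insert e A₀)) := by
  have h1 : (Finset.univ : Finset α) = insert e (Finset.univ.erase e) :=
    (Finset.insert_erase (Finset.mem_univ e)).symm
  calc ∑ A : Finset α, f A = ∑ A ∈ (Finset.univ : Finset α).powerset, f A := by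
        rw [Finset.powerset_univ]
    _ = ∑ A ∈ (insert e (Finset.univ.erase e)).powerset, f A := by rw [← h1]
    _ = (∑ A₀ ∈ (Finset.univ.erase e).powerset, f A₀) +
        ∑ A₀ ∈ (Finset.univ.erase e).powerset, f (insert e A₀) :=
        Finset.sum_powerset_insert (Finset.notMem_erase e Finset.univ) f
    _ = ∑ A₀ ∈ (Finset.univ.erase e).powerset, (f A₀ + f (insert e A₀)) :=
        (Finset.sum_add_distrib).symm

lemma sum_powerset_subtype {α : Type*} [Fintype α] [DecidableEq α] {p : α → Prop}
    [DecidablePred p] (f : Finset {x // p x} → M) :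
    ∑ A ∈ (Finset.univ.filter p).powerset, f (A.subtype p) = ∑ A' : Finset {x // p x}, f A' := by
  refine Finset.sum_bij' (fun A _ => A.subtype p)
    (fun A' _ => A'.map (Function.Embedding.subtype p)) ?_ ?_ ?_ ?_ ?_
  · intro A hA
    exact Finset.mem_univ _
  · intro A' _
    rw [Finset.mem_powerset]
    intro x hx
    obtain ⟨y, _, rfl⟩ := Finset.mem_map.1 hx
    simp only [Finset.mem_filter, Finset.mem_univ, true_and]
    exact y.2
  · intro A hA
    show (Finset.subtype p A).map (Function.Embedding.subtype p) = A
    rw [Finset.subtype_map]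
    refine Finset.filter_eq_self.2 (fun x hx => ?_)
    have := Finset.mem_powerset.1 hA hx
    exact (Finset.mem_filter.1 this).2
  · intro A' _
    show (A'.map (Function.Embedding.subtype p)).subtype p = A'
    ext ⟨x, hx⟩
    simp only [Finset.mem_subtype, Finset.mem_map, Function.Embedding.coe_subtype]
    constructor
    · rintro ⟨⟨y, hy⟩, hmem, hval⟩
      obtain rfl : y = x := hval
      exact hmem
    · intro h
      exact ⟨⟨x, hx⟩, h, rfl⟩
  · intro A hA
    rfl

end SumHelpers

/-- the assembled deletion–contraction–extraction recursion. -/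
lemma xi_rec (G : Multigraph) (e : G.E) :
    G.xi (X 0 : MvPolynomial (Fin 3) ℤ) (X 1) (X 2) =
      (G.deleteEdge e).xi (X 0) (X 1) (X 2)
        + X 1 * (G.contractEdge e).xi (X 0) (X 1) (X 2)
        + X 2 * (G.extractEdge e).xi (X 0) (X 1) (X 2) := by
  classical
  obtain ⟨u, v, huv⟩ := sym2_exists_pair (G.ends e)
  have hu : u ∈ G.ends e := by rw [huv]; exact Sym2.mem_mk_left _ _
  set P : Finset G.E := Finset.univ.erase e with hP
  have hmemP : ∀ {S : Finset G.E}, S ∈ P.powerset → e ∉ S := by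
    intro S hS heS
    exact Finset.notMem_erase e Finset.univ (Finset.mem_powerset.1 hS heS)
  -- expand xi G into four blocks
  have expand : G.xi (X 0 : MvPolynomial (Fin 3) ℤ) (X 1) (X 2) =
      ∑ A₀ ∈ P.powerset, ∑ B₀ ∈ P.powerset,
        (G.term A₀ B₀ + (G.term A₀ (insert e B₀) + G.term (insert e A₀) B₀)) := by
    rw [xi_eq, sum_finset_split e]
    refine Finset.sum_congr rfl (fun A₀ hA₀ => ?_)
    rw [sum_finset_split e (f := fun B => G.term A₀ B),
      sum_finset_split e (f := fun B => G.term (insert e A₀) B), ← Finset.sum_add_distrib]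
    refine Finset.sum_congr rfl (fun B₀ hB₀ => ?_)
    rw [term_zero_both (A := A₀) (B := B₀) hu]
    ring
  rw [expand]
  -- pointwise rewriting of the three nontrivial blocks
  have main : ∀ A₀ ∈ P.powerset, ∀ B₀ ∈ P.powerset,
      G.term A₀ (insert e B₀) + G.term (insert e A₀) B₀ =
        X 1 * (G.contractEdge e).term (A₀.subtype (· ≠ e)) (B₀.subtype (· ≠ e)) +
        (if (∀ f ∈ A₀, G.pex e f) ∧ (∀ f ∈ B₀, G.pex e f) then
          X 2 * (G.extractEdge e).term (A₀.subtype (G.pex e)) (B₀.subtype (G.pex e))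
        else 0) := by
    intro A₀ hA₀ B₀ hB₀
    have hAe : e ∉ A₀ := hmemP hA₀
    have hBe : e ∉ B₀ := hmemP hB₀
    by_cases htB : G.Touches e B₀
    · rw [term_zero_touch htB, term_con_right hu hAe hBe htB, add_zero,
        if_neg (fun hc => (not_touches_iff_avoids.2 (fun f hf => hc.2 f hf)) htB), add_zero]
    · have havB : G.Avoids e B₀ := not_touches_iff_avoids.1 htB
      rw [term_con_left hu hAe hBe havB]
      by_cases htA : G.Touches e A₀
      · rw [term_zero_touchA htA, if_neg (fun hc => ?_), zero_add, add_zero]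
        obtain ⟨f, hf, w, hwf, hwe⟩ := htA
        exact hc.1 f hf w hwf hwe
      · have havA : G.Avoids e A₀ := not_touches_iff_avoids.1 htA
        rw [term_ex hu (fun f hf => havA f hf) (fun f hf => havB f hf),
          if_pos ⟨fun f hf => havA f hf, fun f hf => havB f hf⟩, add_comm]
  have split3 : ∑ A₀ ∈ P.powerset, ∑ B₀ ∈ P.powerset,
      (G.term A₀ B₀ + (G.term A₀ (insert e B₀) + G.term (insert e A₀) B₀)) =
      (∑ A₀ ∈ P.powerset, ∑ B₀ ∈ P.powerset, G.term A₀ B₀) +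
      ((∑ A₀ ∈ P.powerset, ∑ B₀ ∈ P.powerset,
        X 1 * (G.contractEdge e).term (A₀.subtype (· ≠ e)) (B₀.subtype (· ≠ e))) +
      (∑ A₀ ∈ P.powerset, ∑ B₀ ∈ P.powerset,
        (if (∀ f ∈ A₀, G.pex e f) ∧ (∀ f ∈ B₀, G.pex e f) then
          X 2 * (G.extractEdge e).term (A₀.subtype (G.pex e)) (B₀.subtype (G.pex e))
        else 0))) := by
    have step : ∑ A₀ ∈ P.powerset, ∑ B₀ ∈ P.powerset,
        (G.term A₀ B₀ + (G.term A₀ (insert e B₀) + G.term (insert e A₀) B₀)) =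
        ∑ A₀ ∈ P.powerset, ∑ B₀ ∈ P.powerset,
        (G.term A₀ B₀ +
          ((X 1 * (G.contractEdge e).term (A₀.subtype (· ≠ e)) (B₀.subtype (· ≠ e))) +
          (if (∀ f ∈ A₀, G.pex e f) ∧ (∀ f ∈ B₀, G.pex e f) then
            X 2 * (G.extractEdge e).term (A₀.subtype (G.pex e)) (B₀.subtype (G.pex e))
          else 0))) :=
      Finset.sum_congr rfl (fun A₀ hA₀ => Finset.sum_congr rfl (fun B₀ hB₀ => by
        rw [main A₀ hA₀ B₀ hB₀]))
    rw [step]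
    simp only [Finset.sum_add_distrib]
  have hmemF : ∀ {S : Finset G.E},
      S ∈ (Finset.univ.filter (fun x => x ≠ e)).powerset → e ∉ S := by
    intro S hS heS
    exact (Finset.mem_filter.1 (Finset.mem_powerset.1 hS heS)).2 rfl
  have hPfilt : P = Finset.univ.filter (fun x => x ≠ e) := (Finset.filter_ne' _ _).symm
  have hdel : (∑ A₀ ∈ P.powerset, ∑ B₀ ∈ P.powerset, G.term A₀ B₀)
      = (G.deleteEdge e).xi (X 0) (X 1) (X 2) := by
    rw [xi_eq, hPfilt]
    calc ∑ A₀ ∈ (Finset.univ.filter (fun x => x ≠ e)).powerset,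
          ∑ B₀ ∈ (Finset.univ.filter (fun x => x ≠ e)).powerset, G.term A₀ B₀
        = ∑ A₀ ∈ (Finset.univ.filter (fun x => x ≠ e)).powerset,
          ∑ B' : Finset {x : G.E // x ≠ e},
            (G.deleteEdge e).term (A₀.subtype (· ≠ e)) B' := by
          refine Finset.sum_congr rfl (fun A₀ hA₀ => ?_)
          calc ∑ B₀ ∈ (Finset.univ.filter (fun x => x ≠ e)).powerset, G.term A₀ B₀
              = ∑ B₀ ∈ (Finset.univ.filter (fun x => x ≠ e)).powerset,
                (G.deleteEdge e).term (A₀.subtype (· ≠ e)) (B₀.subtype (· ≠ e)) :=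
              Finset.sum_congr rfl (fun B₀ hB₀ => del_term (hmemF hA₀) (hmemF hB₀))
            _ = ∑ B' : Finset {x : G.E // x ≠ e},
                (G.deleteEdge e).term (A₀.subtype (· ≠ e)) B' :=
              sum_powerset_subtype
                (fun B' => (G.deleteEdge e).term (A₀.subtype (· ≠ e)) B')
      _ = ∑ A' : Finset {x : G.E // x ≠ e}, ∑ B' : Finset {x : G.E // x ≠ e},
            (G.deleteEdge e).term A' B' :=
          sum_powerset_subtype
            (fun A' => ∑ B' : Finset {x : G.E // x ≠ e}, (G.deleteEdge e).term A' B')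
  have hcon : (∑ A₀ ∈ P.powerset, ∑ B₀ ∈ P.powerset,
        X 1 * (G.contractEdge e).term (A₀.subtype (· ≠ e)) (B₀.subtype (· ≠ e)))
      = X 1 * (G.contractEdge e).xi (X 0) (X 1) (X 2) := by
    rw [xi_eq, Finset.mul_sum, hPfilt]
    calc ∑ A₀ ∈ (Finset.univ.filter (fun x => x ≠ e)).powerset,
          ∑ B₀ ∈ (Finset.univ.filter (fun x => x ≠ e)).powerset,
            X 1 * (G.contractEdge e).term (A₀.subtype (· ≠ e)) (B₀.subtype (· ≠ e))
        = ∑ A₀ ∈ (Finset.univ.filter (fun x => x ≠ e)).powerset,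
            ∑ B' : Finset {x : G.E // x ≠ e},
              X 1 * (G.contractEdge e).term (A₀.subtype (· ≠ e)) B' :=
          Finset.sum_congr rfl (fun A₀ _ => sum_powerset_subtype
            (fun B' => X 1 * (G.contractEdge e).term (A₀.subtype (· ≠ e)) B'))
      _ = ∑ A' : Finset {x : G.E // x ≠ e}, ∑ B' : Finset {x : G.E // x ≠ e},
            X 1 * (G.contractEdge e).term A' B' :=
          sum_powerset_subtype (fun A' => ∑ B' : Finset {x : G.E // x ≠ e},
            X 1 * (G.contractEdge e).term A' B')
      _ = ∑ A' : Finset (G.contractEdge e).E,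
            X 1 * ∑ B' : Finset (G.contractEdge e).E, (G.contractEdge e).term A' B' :=
          Finset.sum_congr rfl (fun A' _ => (Finset.mul_sum _ _ _).symm)
  have hex : (∑ A₀ ∈ P.powerset, ∑ B₀ ∈ P.powerset,
        (if (∀ f ∈ A₀, G.pex e f) ∧ (∀ f ∈ B₀, G.pex e f) then
          X 2 * (G.extractEdge e).term (A₀.subtype (G.pex e)) (B₀.subtype (G.pex e))
        else 0))
      = X 2 * (G.extractEdge e).xi (X 0) (X 1) (X 2) := by
    rw [xi_eq, Finset.mul_sum]
    have hpow : P.powerset.filter (fun S => ∀ f ∈ S, G.pex e f) =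
        (Finset.univ.filter (G.pex e)).powerset := by
      ext S
      constructor
      · intro hS
        have h2 := (Finset.mem_filter.1 hS).2
        exact Finset.mem_powerset.2
          (fun x hx => Finset.mem_filter.2 ⟨Finset.mem_univ x, h2 x hx⟩)
      · intro hS
        have h := Finset.mem_powerset.1 hS
        refine Finset.mem_filter.2 ⟨Finset.mem_powerset.2 (fun x hx => ?_),
          fun f hf => (Finset.mem_filter.1 (h hf)).2⟩
        rw [hP]
        refine Finset.mem_erase.2 ⟨?_, Finset.mem_univ x⟩
        intro hxe
        exact (Finset.mem_filter.1 (h hx)).2 u (hxe ▸ hu) hu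
    calc ∑ A₀ ∈ P.powerset, ∑ B₀ ∈ P.powerset,
        (if (∀ f ∈ A₀, G.pex e f) ∧ (∀ f ∈ B₀, G.pex e f) then
          X 2 * (G.extractEdge e).term (A₀.subtype (G.pex e)) (B₀.subtype (G.pex e))
        else 0)
        = ∑ A₀ ∈ P.powerset,
          (if (∀ f ∈ A₀, G.pex e f) then
            ∑ B₀ ∈ (Finset.univ.filter (G.pex e)).powerset,
              X 2 * (G.extractEdge e).term (A₀.subtype (G.pex e)) (B₀.subtype (G.pex e))
          else 0) := by
          refine Finset.sum_congr rfl (fun A₀ _ => ?_)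
          by_cases hA : ∀ f ∈ A₀, G.pex e f
          · rw [if_pos hA, ← hpow, Finset.sum_filter]
            refine Finset.sum_congr rfl (fun B₀ _ => ?_)
            by_cases hB : ∀ f ∈ B₀, G.pex e f
            · rw [if_pos ⟨hA, hB⟩, if_pos hB]
            · rw [if_neg (fun hc => hB hc.2), if_neg hB]
          · rw [if_neg hA, Finset.sum_eq_zero]
            intro B₀ _
            rw [if_neg (fun hc => hA hc.1)]
      _ = ∑ A₀ ∈ (Finset.univ.filter (G.pex e)).powerset,
            ∑ B₀ ∈ (Finset.univ.filter (G.pex e)).powerset,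
              X 2 * (G.extractEdge e).term (A₀.subtype (G.pex e)) (B₀.subtype (G.pex e)) := by
          rw [← hpow, Finset.sum_filter]
      _ = ∑ A₀ ∈ (Finset.univ.filter (G.pex e)).powerset,
            ∑ B' : Finset {x : G.E // G.pex e x},
              X 2 * (G.extractEdge e).term (A₀.subtype (G.pex e)) B' :=
          Finset.sum_congr rfl (fun A₀ _ => sum_powerset_subtype
            (fun B' => X 2 * (G.extractEdge e).term (A₀.subtype (G.pex e)) B'))
      _ = ∑ A' : Finset {x : G.E // G.pex e x}, ∑ B' : Finset {x : G.E // G.pex e x},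
            X 2 * (G.extractEdge e).term A' B' :=
          sum_powerset_subtype (fun A' => ∑ B' : Finset {x : G.E // G.pex e x},
            X 2 * (G.extractEdge e).term A' B')
      _ = ∑ A' : Finset (G.extractEdge e).E,
            X 2 * ∑ B' : Finset (G.extractEdge e).E, (G.extractEdge e).term A' B' :=
          Finset.sum_congr rfl (fun A' _ => (Finset.mul_sum _ _ _).symm)
  rw [split3, hdel, hcon, hex]
  ring

end Multigraph
namespace Multigraph
open MvPolynomial

/-- The edgeless multigraph on `Fin n`. -/
def discreteGraph (n : ℕ) : Multigraph where
  V := Fin n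
  E := Empty
  ends := fun e => e.elim

/-- Two edgeless multigraphs with equinumerous vertex sets are isomorphic. -/
def isoOfNoEdges {G H : Multigraph} (hG : IsEmpty G.E) (hH : IsEmpty H.E)
    (hv : G.V ≃ H.V) : G.Iso H :=
  { vEquiv := hv
    eEquiv := @Equiv.equivOfIsEmpty _ _ hG hH
    ends_map := fun e => (hG.false e).elim }

instance (n : ℕ) : IsEmpty (discreteGraph n).E := inferInstanceAs (IsEmpty Empty)

section Unique

variable (f : Multigraph → MvPolynomial (Fin 3) ℤ)
  (hinv : Multigraph.Invariant f)
  (hempty : f Multigraph.emptyGraph = 1)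
  (hsingle : f Multigraph.singleVertex = X 0)
  (hmul : ∀ G₁ G₂ : Multigraph, f (G₁.disjUnion G₂) = f G₁ * f G₂)

include hinv hempty hsingle hmul in
lemma f_discrete : ∀ n : ℕ, f (discreteGraph n) = X 0 ^ n := by
  intro n
  induction n with
  | zero =>
    have hiso : (discreteGraph 0).Iso Multigraph.emptyGraph :=
      isoOfNoEdges inferInstance (inferInstanceAs (IsEmpty Empty))
        (@Equiv.equivOfIsEmpty _ _ (by exact inferInstanceAs (IsEmpty (Fin 0)))
          (inferInstanceAs (IsEmpty Empty)))
    rw [hinv _ _ ⟨hiso⟩, hempty, pow_zero]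
  | succ n ih =>
    have hE : IsEmpty (Multigraph.singleVertex.disjUnion (discreteGraph n)).E :=
      inferInstanceAs (IsEmpty (Empty ⊕ Empty))
    have hv : (discreteGraph (n + 1)).V ≃
        (Multigraph.singleVertex.disjUnion (discreteGraph n)).V := by
      apply Fintype.equivOfCardEq
      show Fintype.card (Fin (n + 1)) = Fintype.card (Unit ⊕ Fin n)
      simp [add_comm]
    have hiso : (discreteGraph (n + 1)).Iso
        (Multigraph.singleVertex.disjUnion (discreteGraph n)) :=
      isoOfNoEdges inferInstance hE hv
    rw [hinv _ _ ⟨hiso⟩, hmul, hsingle, ih, pow_succ]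
    ring

include hinv hempty hsingle hmul in
lemma f_edgeless (G : Multigraph) (hE : IsEmpty G.E) :
    f G = X 0 ^ (Fintype.card G.V) := by
  have hiso : G.Iso (discreteGraph (Fintype.card G.V)) :=
    isoOfNoEdges hE inferInstance (Fintype.equivFin G.V)
  rw [hinv _ _ ⟨hiso⟩, f_discrete f hinv hempty hsingle hmul]

end Unique

lemma unique_aux (f g : Multigraph → MvPolynomial (Fin 3) ℤ)
    (hinvf : Multigraph.Invariant f)
    (hemptyf : f Multigraph.emptyGraph = 1)
    (hsinglef : f Multigraph.singleVertex = X 0)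
    (hmulf : ∀ G₁ G₂ : Multigraph, f (G₁.disjUnion G₂) = f G₁ * f G₂)
    (hrecf : ∀ (G : Multigraph) (e : G.E),
      f G = f (G.deleteEdge e) + X 1 * f (G.contractEdge e) + X 2 * f (G.extractEdge e))
    (hinvg : Multigraph.Invariant g)
    (hemptyg : g Multigraph.emptyGraph = 1)
    (hsingleg : g Multigraph.singleVertex = X 0)
    (hmulg : ∀ G₁ G₂ : Multigraph, g (G₁.disjUnion G₂) = g G₁ * g G₂)
    (hrecg : ∀ (G : Multigraph) (e : G.E),
      g G = g (G.deleteEdge e) + X 1 * g (G.contractEdge e) + X 2 * g (G.extractEdge e)) :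
    f = g := by
  funext G
  suffices h : ∀ (n : ℕ) (G : Multigraph), Fintype.card G.E ≤ n → f G = g G from
    h (Fintype.card G.E) G le_rfl
  intro n
  induction n with
  | zero =>
    intro G hG
    haveI hE : IsEmpty G.E := Fintype.card_eq_zero_iff.1 (Nat.le_zero.1 hG)
    rw [f_edgeless f hinvf hemptyf hsinglef hmulf G hE,
      f_edgeless g hinvg hemptyg hsingleg hmulg G hE]
  | succ n ih =>
    intro G hG
    by_cases hE : IsEmpty G.E
    · rw [f_edgeless f hinvf hemptyf hsinglef hmulf G hE,
        f_edgeless g hinvg hemptyg hsingleg hmulg G hE]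
    · obtain ⟨e⟩ := not_isEmpty_iff.1 hE
      have hdel : Fintype.card (G.deleteEdge e).E ≤ n := by
        have : Fintype.card {e' : G.E // e' ≠ e} < Fintype.card G.E :=
          Fintype.card_subtype_lt (x := e) (by simp)
        have h2 : Fintype.card (G.deleteEdge e).E = Fintype.card {e' : G.E // e' ≠ e} := rfl
        omega
      have hcon : Fintype.card (G.contractEdge e).E ≤ n := hdel
      have hext : Fintype.card (G.extractEdge e).E ≤ n := by
        have hu : ∃ u : G.V, u ∈ G.ends e := by
          obtain ⟨u, v, huv⟩ := sym2_exists_pair (G.ends e)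
          exact ⟨u, by rw [huv]; exact Sym2.mem_mk_left _ _⟩
        obtain ⟨u, hu⟩ := hu
        have : Fintype.card {e' : G.E // ∀ w : G.V, w ∈ G.ends e' → w ∉ G.ends e}
            < Fintype.card G.E :=
          Fintype.card_subtype_lt (x := e) (by
            intro h
            exact h u hu hu)
        have h2 : Fintype.card (G.extractEdge e).E
            = Fintype.card {e' : G.E // ∀ w : G.V, w ∈ G.ends e' → w ∉ G.ends e} := rfl
        omega
      rw [hrecf G e, hrecg G e, ih _ hdel, ih _ hcon, ih _ hext]

end Multigraph
open MvPolynomial Multigraph in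
/-- `ξ` is the unique isomorphism-invariant function from finite
multigraphs to `ℤ[x,y,z]` with `f(∅) = 1`, `f(E₁) = x`, multiplicative over disjoint
unions, and satisfying `f(G) = f(G₋ₑ) + y·f(G/e) + z·f(G†e)` for every edge `e`. -/
theorem xi_unique_characterization :
    (Multigraph.Invariant (fun G => G.xi (X 0 : MvPolynomial (Fin 3) ℤ) (X 1) (X 2))
      ∧ Multigraph.emptyGraph.xi (X 0 : MvPolynomial (Fin 3) ℤ) (X 1) (X 2) = 1
      ∧ Multigraph.singleVertex.xi (X 0 : MvPolynomial (Fin 3) ℤ) (X 1) (X 2) = X 0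
      ∧ (∀ G₁ G₂ : Multigraph, (G₁.disjUnion G₂).xi (X 0 : MvPolynomial (Fin 3) ℤ) (X 1) (X 2) =
          G₁.xi (X 0) (X 1) (X 2) * G₂.xi (X 0) (X 1) (X 2))
      ∧ (∀ (G : Multigraph) (e : G.E),
          G.xi (X 0 : MvPolynomial (Fin 3) ℤ) (X 1) (X 2) =
            (G.deleteEdge e).xi (X 0) (X 1) (X 2)
              + X 1 * (G.contractEdge e).xi (X 0) (X 1) (X 2)
              + X 2 * (G.extractEdge e).xi (X 0) (X 1) (X 2)))
    ∧ (∀ f : Multigraph → MvPolynomial (Fin 3) ℤ,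
        Multigraph.Invariant f →
        f Multigraph.emptyGraph = 1 →
        f Multigraph.singleVertex = X 0 →
        (∀ G₁ G₂ : Multigraph, f (G₁.disjUnion G₂) = f G₁ * f G₂) →
        (∀ (G : Multigraph) (e : G.E),
          f G = f (G.deleteEdge e) + X 1 * f (G.contractEdge e)
            + X 2 * f (G.extractEdge e)) →
        f = fun G => G.xi (X 0) (X 1) (X 2)) := by
  constructor
  · exact ⟨fun G H h => h.elim (fun φ => xi_iso φ), xi_emptyGraph, xi_singleVertex,
      xi_disjUnion, xi_rec⟩
  · intro f hinv hempty hsingle hmul hrec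
    exact unique_aux f _ hinv hempty hsingle hmul hrec
      (fun G H h => h.elim (fun φ => xi_iso φ)) xi_emptyGraph xi_singleVertex
      xi_disjUnion xi_rec
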